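/- arXiv:1502.04271 — 2 statements merged into one kernel-verified Lean document; each statement's English description precedes it below -/
import Mathlib

section
/- For a nonnegative tensor T of order k and dimension n, the spectral radius ρ(T) is an eigenvalue of T with a corresponding nonnegative eigenvector, i.e., ρ(T) is an H+-eigenvalue. -/
open Finset

/-- A `k`-uniform hypergraph on vertex type `V`. -/
structure UHypergraph (V : Type*) (k : ℕ) where
  edges : Finset (Finset V)
  uniform : ∀ e ∈ edges, e.card = k

namespace UHypergraph

variable {V : Type*} {k : ℕ}

/-- The degree of a vertex: the number of edges containing it. -/
def degree [DecidableEq V] (G : UHypergraph V k) (v : V) : ℕ :=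
  (G.edges.filter fun e => v ∈ e).card

/-- There is a walk from `a` to `b`. -/
def HasWalk (G : UHypergraph V k) (a b : V) : Prop :=
  ∃ (l : ℕ) (v : Fin (l + 1) → V) (e : Fin l → Finset V),
    v 0 = a ∧ v (Fin.last l) = b ∧
    ∀ i : Fin l, e i ∈ G.edges ∧ v i.castSucc ∈ e i ∧ v i.succ ∈ e i

/-- `G` is connected: every two vertices are joined by a walk. -/
def Connected (G : UHypergraph V k) : Prop := ∀ a b : V, G.HasWalk a b

/-- A cycle `v_0 e_1 v_1 ⋯ e_l v_0`: pairwise distinct vertices, pairwise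
distinct edges, with `{v i, v (i+1)} ⊆ e i` (indices mod `len`). -/
structure HCycle (G : UHypergraph V k) where
  len : ℕ
  two_le : 2 ≤ len
  vtx : Fin len → V
  edg : Fin len → Finset V
  vtx_inj : Function.Injective vtx
  edg_inj : Function.Injective edg
  edg_mem : ∀ i, edg i ∈ G.edges
  fst_mem : ∀ i, vtx i ∈ edg i
  snd_mem : ∀ i : Fin len, vtx ⟨((i : ℕ) + 1) % len, Nat.mod_lt _ (by omega)⟩ ∈ edg i

/-- `G` contains no cycle. -/
def Acyclic (G : UHypergraph V k) : Prop := IsEmpty (HCycle G)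

/-- A hypertree is a connected acyclic hypergraph. -/
def IsHypertree (G : UHypergraph V k) : Prop := G.Connected ∧ G.Acyclic

/-- `G` is unicyclic: connected with exactly one cycle (any two cycles have
the same vertex set and the same edge set). -/
def IsUnicyclic (G : UHypergraph V k) : Prop :=
  G.Connected ∧ Nonempty (HCycle G) ∧
    ∀ C C' : HCycle G,
      Set.range C.vtx = Set.range C'.vtx ∧ Set.range C.edg = Set.range C'.edg

/-- The girth: the minimum length of a cycle. -/
noncomputable def girth (G : UHypergraph V k) : ℕ := sInf {l | ∃ C : HCycle G, C.len = l}

/-- `G` is linear: any two distinct edges meet in at most one vertex. -/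
def Linear [DecidableEq V] (G : UHypergraph V k) : Prop :=
  ∀ e ∈ G.edges, ∀ f ∈ G.edges, e ≠ f → (e ∩ f).card ≤ 1

/-- Bicyclic: connected with cyclomatic number `m(k-1) - n + 1 = 2`. -/
def IsBicyclic [Fintype V] (G : UHypergraph V k) : Prop :=
  G.Connected ∧ G.edges.card * (k - 1) = Fintype.card V + 1

end UHypergraph

/-- Isomorphism of `k`-uniform hypergraphs. -/
def HIso {V W : Type*} [DecidableEq W] {k : ℕ} (G : UHypergraph V k) (H : UHypergraph W k) : Prop :=
  ∃ φ : V ≃ W, ∀ e : Finset V, e ∈ G.edges ↔ e.image (φ : V → W) ∈ H.edges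

section Tensor

variable {V : Type*} {k : ℕ}

/-- Prepend `i` to a `(k-1)`-tuple, obtaining a `k`-tuple. -/
def tupleCons (i : V) (g : Fin (k - 1) → V) : Fin k → V :=
  fun j => if h : (j : ℕ) = 0 then i else g ⟨(j : ℕ) - 1, by have := j.isLt; omega⟩

/-- `(T x^{k-1})_i = ∑_{i_2,…,i_k} t_{i i_2 … i_k} x_{i_2} ⋯ x_{i_k}`. -/
def tApply [Fintype V] {R : Type*} [CommSemiring R] (T : (Fin k → V) → R) (x : V → R) (i : V) : R :=
  ∑ g : Fin (k - 1) → V, T (tupleCons i g) * ∏ j, x (g j)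

/-- `lam ∈ ℂ` is an eigenvalue of the real tensor `T`:
`T x^{k-1} = lam x^{[k-1]}` for some `x ≠ 0`. -/
def IsEig [Fintype V] (T : (Fin k → V) → ℝ) (lam : ℂ) : Prop :=
  ∃ x : V → ℂ, x ≠ 0 ∧ ∀ i, tApply (fun f => ((T f : ℝ) : ℂ)) x i = lam * x i ^ (k - 1)

/-- The spectral radius of a tensor: the maximum modulus of its eigenvalues. -/
noncomputable def specRad [Fintype V] (T : (Fin k → V) → ℝ) : ℝ :=
  sSup {r : ℝ | ∃ lam : ℂ, IsEig T lam ∧ ‖lam‖ = r}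

/-- The arc `i → j` of the digraph `G(T)` associated with a nonnegative tensor. -/
def arcRel (T : (Fin k → V) → ℝ) (i j : V) : Prop :=
  ∃ g : Fin (k - 1) → V, 0 < T (tupleCons i g) ∧ ∃ l, g l = j

/-- `T` is weakly irreducible: the associated digraph is strongly connected. -/
def WeaklyIrreducible (T : (Fin k → V) → ℝ) : Prop :=
  ∀ a b : V, Relation.ReflTransGen (arcRel T) a b

/-- The adjacency tensor of a `k`-uniform hypergraph: entry `1/(k-1)!` on
tuples of distinct vertices forming an edge, `0` otherwise. -/
noncomputable def adjTensor [Fintype V] [DecidableEq V] (G : UHypergraph V k) : (Fin k → V) → ℝ :=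
  fun f => if Function.Injective f ∧ Finset.image f Finset.univ ∈ G.edges
    then ((Nat.factorial (k - 1) : ℝ))⁻¹ else 0

/-- The spectral radius of a hypergraph. -/
noncomputable def hSpecRad [Fintype V] [DecidableEq V] (G : UHypergraph V k) : ℝ :=
  specRad (adjTensor G)

/-- `x` is a Perron vector of `G`: a positive eigenvector for `ρ(G)`. -/
def IsPerron [Fintype V] [DecidableEq V] (G : UHypergraph V k) (x : V → ℝ) : Prop :=
  (∀ v, 0 < x v) ∧ ∀ i, tApply (adjTensor G) x i = hSpecRad G * x i ^ (k - 1)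

end Tensor

section Shapes

variable {V : Type*} {k : ℕ}

/-- A hyperstar: all edges share a common vertex `c`, and pairwise meet exactly in `c`. -/
def IsHyperstar [DecidableEq V] (G : UHypergraph V k) : Prop :=
  G.Connected ∧ ∃ c : V, (∀ e ∈ G.edges, c ∈ e) ∧
    ∀ e ∈ G.edges, ∀ f ∈ G.edges, e ≠ f → e ∩ f = {c}

/-- `H` is the `k`-th power of the simple graph (2-uniform hypergraph) `B`:
each edge of `B` is enlarged by `k-2` new vertices, all distinct. -/
def IsPowerOf [DecidableEq V] {W : Type*} (H : UHypergraph V k) (B : UHypergraph W 2) : Prop :=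
  ∃ (ι : W ↪ V) (ν : ({e // e ∈ B.edges} × Fin (k - 2)) ↪ V),
    (∀ w p, ι w ≠ ν p) ∧
    (∀ v : V, (∃ w, ι w = v) ∨ (∃ p, ν p = v)) ∧
    H.edges = B.edges.attach.image
      (fun e => e.1.map ι ∪ Finset.image (fun j : Fin (k - 2) => ν (e, j)) Finset.univ)

/-- `H` is a power hypergraph: the `k`-th power of some simple graph. -/
def IsPowerHG [DecidableEq V] (H : UHypergraph V k) : Prop :=
  ∃ (W : Type) (B : UHypergraph W 2), IsPowerOf H B

/-- The shape of `S_{m,g}^k`: a linear unicyclic hypergraph with `m` edges and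
girth `g`, whose cycle has length `g`, all non-cycle edges being pendant edges
at a common cycle vertex `u` (their other vertices having degree one). -/
def IsSmg [DecidableEq V] (g m : ℕ) (G : UHypergraph V k) : Prop :=
  G.IsUnicyclic ∧ G.Linear ∧ G.edges.card = m ∧ G.girth = g ∧
    ∃ (C : UHypergraph.HCycle G) (u : V), C.len = g ∧ (∃ i, C.vtx i = u) ∧
      ∀ f ∈ G.edges, (∃ i, C.edg i = f) ∨
        (u ∈ f ∧ ∀ w ∈ f, w ≠ u → G.degree w = 1)

/-- The shape of `B_m^P`: the `k`-th power of `K_4` minus an edge (two triangles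
on `a,b,c` and `a,b,d` sharing base `a b`) with a hyperstar of `m - 5` edges
attached at the degree-3 vertex `a`. -/
def IsBmP [DecidableEq V] (m : ℕ) (G : UHypergraph V k) : Prop :=
  G.Connected ∧ G.edges.card = m ∧
    ∃ (a b c d : V) (f : Fin 5 → Finset V),
      (a ≠ b ∧ a ≠ c ∧ a ≠ d ∧ b ≠ c ∧ b ≠ d ∧ c ≠ d) ∧
      Function.Injective f ∧ (∀ i, f i ∈ G.edges) ∧
      f 0 ∩ {a, b, c, d} = {a, b} ∧
      f 1 ∩ {a, b, c, d} = {a, c} ∧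
      f 2 ∩ {a, b, c, d} = {b, c} ∧
      f 3 ∩ {a, b, c, d} = {a, d} ∧
      f 4 ∩ {a, b, c, d} = {b, d} ∧
      (∀ i, ∀ w ∈ f i, w ∉ ({a, b, c, d} : Finset V) → G.degree w = 1) ∧
      (∀ e ∈ G.edges, (∀ i, f i ≠ e) → a ∈ e ∧ ∀ w ∈ e, w ≠ a → G.degree w = 1)

/-- The core `G_5`: an edge `e ⊇ {v1,v2,v3}` and three further edges joining
`v1, v2, v3` to a common vertex `w` outside `e`; all vertices of these four
edges other than `w, v1, v2, v3` have degree one. -/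
def G5Core [DecidableEq V] (G : UHypergraph V k) (w v1 v2 v3 : V) (e g1 g2 g3 : Finset V) : Prop :=
  (w ≠ v1 ∧ w ≠ v2 ∧ w ≠ v3 ∧ v1 ≠ v2 ∧ v1 ≠ v3 ∧ v2 ≠ v3) ∧
  (e ∈ G.edges ∧ g1 ∈ G.edges ∧ g2 ∈ G.edges ∧ g3 ∈ G.edges) ∧
  (e ≠ g1 ∧ e ≠ g2 ∧ e ≠ g3 ∧ g1 ≠ g2 ∧ g1 ≠ g3 ∧ g2 ≠ g3) ∧
  e ∩ {w, v1, v2, v3} = {v1, v2, v3} ∧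
  g1 ∩ {w, v1, v2, v3} = {w, v1} ∧
  g2 ∩ {w, v1, v2, v3} = {w, v2} ∧
  g3 ∩ {w, v1, v2, v3} = {w, v3} ∧
  (∀ f ∈ ({e, g1, g2, g3} : Finset (Finset V)), ∀ x ∈ f, x ∉ ({w, v1, v2, v3} : Finset V) →
    G.degree x = 1)

/-- `B_m^L(1)`: `G_5` with a hyperstar of `m-4` edges attached at the degree-3 vertex `w`. -/
def IsBmL1 [DecidableEq V] (m : ℕ) (G : UHypergraph V k) : Prop :=
  G.Connected ∧ G.edges.card = m ∧
    ∃ (w v1 v2 v3 : V) (e g1 g2 g3 : Finset V), G5Core G w v1 v2 v3 e g1 g2 g3 ∧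
      ∀ f ∈ G.edges, f ∉ ({e, g1, g2, g3} : Finset (Finset V)) →
        w ∈ f ∧ ∀ x ∈ f, x ≠ w → G.degree x = 1

/-- `B_m^L(2)`: `G_5` with a hyperstar of `m-4` edges attached at a degree-2 vertex `v1`. -/
def IsBmL2 [DecidableEq V] (m : ℕ) (G : UHypergraph V k) : Prop :=
  G.Connected ∧ G.edges.card = m ∧
    ∃ (w v1 v2 v3 : V) (e g1 g2 g3 : Finset V), G5Core G w v1 v2 v3 e g1 g2 g3 ∧
      ∀ f ∈ G.edges, f ∉ ({e, g1, g2, g3} : Finset (Finset V)) →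
        v1 ∈ f ∧ ∀ x ∈ f, x ≠ v1 → G.degree x = 1

/-- The support (vertex set) of a set of edges. -/
def esupp {V : Type*} [DecidableEq V] (E : Finset (Finset V)) : Finset V := E.sup id

end Shapes

section PFAux

open Filter Topology

variable {k n : ℕ}

lemma tApply_nonneg (T : (Fin k → Fin n) → ℝ) (hT : ∀ f, 0 ≤ T f)
    (x : Fin n → ℝ) (hx : ∀ i, 0 ≤ x i) (i : Fin n) : 0 ≤ tApply T x i :=
  Finset.sum_nonneg fun g _ => mul_nonneg (hT _) (Finset.prod_nonneg fun j _ => hx _)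

lemma tApply_mono (T : (Fin k → Fin n) → ℝ) (hT : ∀ f, 0 ≤ T f)
    {u v : Fin n → ℝ} (hu : ∀ j, 0 ≤ u j) (huv : ∀ j, u j ≤ v j) (i : Fin n) :
    tApply T u i ≤ tApply T v i :=
  Finset.sum_le_sum fun g _ => mul_le_mul_of_nonneg_left
    (Finset.prod_le_prod (fun j _ => hu _) (fun j _ => huv _)) (hT _)

lemma tApply_le_tApply_of_le {T A : (Fin k → Fin n) → ℝ} (hTA : ∀ f, T f ≤ A f)
    {u : Fin n → ℝ} (hu : ∀ j, 0 ≤ u j) (i : Fin n) :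
    tApply T u i ≤ tApply A u i :=
  Finset.sum_le_sum fun g _ => mul_le_mul_of_nonneg_right (hTA _)
    (Finset.prod_nonneg fun j _ => hu _)

lemma tApply_smul (T : (Fin k → Fin n) → ℝ) (c : ℝ) (x : Fin n → ℝ) (i : Fin n) :
    tApply T (fun j => c * x j) i = c ^ (k - 1) * tApply T x i := by
  unfold tApply
  rw [Finset.mul_sum]
  refine Finset.sum_congr rfl fun g _ => ?_
  rw [Finset.prod_mul_distrib, Finset.prod_const]
  simp only [Finset.card_univ, Fintype.card_fin]
  ring

lemma continuous_tApply (T : (Fin k → Fin n) → ℝ) (i : Fin n) :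
    Continuous fun x : Fin n → ℝ => tApply T x i := by
  unfold tApply
  exact continuous_finset_sum _ fun g _ =>
    continuous_const.mul (continuous_finset_prod _ fun j _ => continuous_apply _)

lemma tApply_add_const (T : (Fin k → Fin n) → ℝ) (ε : ℝ) (x : Fin n → ℝ) (i : Fin n) :
    tApply (fun f => T f + ε) x i
      = tApply T x i + ε * ∑ g : Fin (k - 1) → Fin n, ∏ j, x (g j) := by
  unfold tApply
  rw [Finset.mul_sum, ← Finset.sum_add_distrib]
  exact Finset.sum_congr rfl fun g _ => by ring

lemma abs_tApply_le (T : (Fin k → Fin n) → ℝ) (hT : ∀ f, 0 ≤ T f)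
    (y : Fin n → ℂ) (i : Fin n) :
    ‖tApply (fun f => ((T f : ℝ) : ℂ)) y i‖
      ≤ tApply T (fun j => ‖y j‖) i := by
  unfold tApply
  refine (norm_sum_le _ _).trans (le_of_eq (Finset.sum_congr rfl fun g _ => ?_))
  rw [norm_mul, norm_prod, Complex.norm_real, Real.norm_of_nonneg (hT _)]

/-- A priori bound on Collatz–Wielandt numbers. -/
lemma cw_apriori_bound (hk : 2 ≤ k) (hn : 1 ≤ n)
    {A : (Fin k → Fin n) → ℝ} {M : ℝ} (hM : ∀ f, A f ≤ M) (hM0 : 0 ≤ M)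
    {s : ℝ} (hs : 0 ≤ s) {x : Fin n → ℝ} (hx : ∀ i, 0 ≤ x i)
    (hsum : ∑ i, x i = 1)
    (hineq : ∀ i, s * x i ^ (k - 1) ≤ tApply A x i) :
    s ≤ M * (Fintype.card (Fin (k - 1) → Fin n)) * n ^ (k - 1) := by
  haveI : Nonempty (Fin n) := ⟨⟨0, hn⟩⟩
  have hx1 : ∀ j, x j ≤ 1 := by
    intro j
    calc x j ≤ ∑ i, x i := Finset.single_le_sum (fun i _ => hx i) (Finset.mem_univ j)
    _ = 1 := hsum
  obtain ⟨i0, -, hmax⟩ := Finset.exists_max_image Finset.univ x Finset.univ_nonempty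
  have hxi0 : (n : ℝ)⁻¹ ≤ x i0 := by
    have h1 : (1 : ℝ) ≤ n * x i0 := by
      calc (1 : ℝ) = ∑ i, x i := hsum.symm
      _ ≤ (Finset.univ.card : ℕ) • x i0 :=
        Finset.sum_le_card_nsmul _ _ _ (fun i _ => hmax i (Finset.mem_univ i))
      _ = n * x i0 := by simp [Finset.card_univ]
    have hn0 : (0 : ℝ) < n := by exact_mod_cast hn
    rw [inv_le_iff_one_le_mul₀ hn0]
    linarith
  have htApp : tApply A x i0 ≤ M * (Fintype.card (Fin (k - 1) → Fin n)) := by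
    unfold tApply
    calc ∑ g : Fin (k - 1) → Fin n, A (tupleCons i0 g) * ∏ j, x (g j)
        ≤ ∑ _g : Fin (k - 1) → Fin n, M * 1 := by
          refine Finset.sum_le_sum fun g _ => ?_
          exact mul_le_mul (hM _) (Finset.prod_le_one (fun j _ => hx _) (fun j _ => hx1 _))
            (Finset.prod_nonneg fun j _ => hx _) hM0
    _ = M * (Fintype.card (Fin (k - 1) → Fin n)) := by
          rw [Finset.sum_const, Finset.card_univ, nsmul_eq_mul, mul_one, mul_comm]
  have hpow : ((n : ℝ)⁻¹) ^ (k - 1) ≤ x i0 ^ (k - 1) :=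
    pow_le_pow_left₀ (by positivity) hxi0 _
  have h2 : s * ((n : ℝ)⁻¹) ^ (k - 1) ≤ M * (Fintype.card (Fin (k - 1) → Fin n)) :=
    le_trans (by nlinarith [hineq i0]) htApp
  have hn0 : (0 : ℝ) < (n : ℝ) ^ (k - 1) := by positivity
  calc s = s * ((n : ℝ)⁻¹) ^ (k - 1) * (n : ℝ) ^ (k - 1) := by
        rw [mul_assoc, ← mul_pow, inv_mul_cancel₀ (by positivity), one_pow, mul_one]
  _ ≤ M * (Fintype.card (Fin (k - 1) → Fin n)) * (n : ℝ) ^ (k - 1) :=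
        mul_le_mul_of_nonneg_right h2 hn0.le

/-- Perron–Frobenius for strictly positive tensors, via maximization of the
Collatz–Wielandt functional over a compact feasible set. -/
lemma posPF (hk : 2 ≤ k) (hn : 1 ≤ n) (A : (Fin k → Fin n) → ℝ) (hA : ∀ f, 0 < A f) :
    ∃ (lam : ℝ) (x : Fin n → ℝ), 0 < lam ∧ (∀ i, 0 < x i) ∧ (∑ i, x i = 1) ∧
      ∀ i, tApply A x i = lam * x i ^ (k - 1) := by
  haveI : Nonempty (Fin n) := ⟨⟨0, hn⟩⟩
  have hA0 : ∀ f, 0 ≤ A f := fun f => (hA f).le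
  have hk1 : k - 1 ≠ 0 := by omega
  set N : ℕ := Fintype.card (Fin (k - 1) → Fin n) with hN
  obtain ⟨f0⟩ : Nonempty (Fin k → Fin n) := inferInstance
  set M : ℝ := Finset.univ.sup' ⟨f0, Finset.mem_univ f0⟩ A with hMdef
  have hM : ∀ f, A f ≤ M := fun f => Finset.le_sup' A (Finset.mem_univ f)
  have hM0 : 0 ≤ M := le_trans (hA f0).le (hM f0)
  set C : ℝ := M * N * n ^ (k - 1) with hC
  -- the compact feasible set
  set K : Set (ℝ × (Fin n → ℝ)) :=
    {p | 0 ≤ p.1 ∧ (∀ i, 0 ≤ p.2 i) ∧ (∑ i, p.2 i = 1) ∧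
      ∀ i, p.1 * p.2 i ^ (k - 1) ≤ tApply A p.2 i} with hK
  have hbound : ∀ p ∈ K, p.1 ≤ C := by
    rintro ⟨s, x⟩ ⟨hs, hx, hsum, hineq⟩
    exact cw_apriori_bound hk hn hM hM0 hs hx hsum hineq
  have hx1ofK : ∀ p ∈ K, ∀ j, p.2 j ≤ 1 := by
    rintro ⟨s, x⟩ ⟨hs, hx, hsum, hineq⟩ j
    calc x j ≤ ∑ i, x i := Finset.single_le_sum (fun i _ => hx i) (Finset.mem_univ j)
    _ = 1 := hsum
  have hKsub : K ⊆ Set.Icc ((0 : ℝ), (0 : Fin n → ℝ)) (C, 1) := by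
    rintro ⟨s, x⟩ hp
    obtain ⟨hs, hx, hsum, hineq⟩ := hp
    exact ⟨⟨hs, fun i => hx i⟩, ⟨hbound _ ⟨hs, hx, hsum, hineq⟩, fun i => hx1ofK _ ⟨hs, hx, hsum, hineq⟩ i⟩⟩
  have hKclosed : IsClosed K := by
    have h1 : IsClosed {p : ℝ × (Fin n → ℝ) | 0 ≤ p.1} :=
      isClosed_le continuous_const continuous_fst
    have h2 : IsClosed {p : ℝ × (Fin n → ℝ) | ∀ i, 0 ≤ p.2 i} := by
      rw [Set.setOf_forall]
      exact isClosed_iInter fun i =>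
        isClosed_le continuous_const ((continuous_apply i).comp continuous_snd)
    have h3 : IsClosed {p : ℝ × (Fin n → ℝ) | ∑ i, p.2 i = 1} :=
      isClosed_eq (continuous_finset_sum _ fun i _ =>
        (continuous_apply i).comp continuous_snd) continuous_const
    have h4 : IsClosed {p : ℝ × (Fin n → ℝ) |
        ∀ i, p.1 * p.2 i ^ (k - 1) ≤ tApply A p.2 i} := by
      rw [Set.setOf_forall]
      refine isClosed_iInter fun i => isClosed_le ?_ ?_
      · exact continuous_fst.mul (((continuous_apply i).comp continuous_snd).pow _)
      · exact (continuous_tApply A i).comp continuous_snd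
    have : K = {p : ℝ × (Fin n → ℝ) | 0 ≤ p.1} ∩ ({p | ∀ i, 0 ≤ p.2 i} ∩
        ({p | ∑ i, p.2 i = 1} ∩ {p | ∀ i, p.1 * p.2 i ^ (k - 1) ≤ tApply A p.2 i})) := by
      ext p
      simp only [hK, Set.mem_setOf_eq, Set.mem_inter_iff]
      try tauto
    rw [this]
    exact h1.inter (h2.inter (h3.inter h4))
  have hKcompact : IsCompact K := (isCompact_Icc.of_isClosed_subset hKclosed hKsub)
  have hn0 : (0 : ℝ) < n := by exact_mod_cast hn
  have hKne : K.Nonempty := by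
    refine ⟨(0, fun _ => (n : ℝ)⁻¹), le_refl 0, fun i => by positivity, ?_, fun i => ?_⟩
    · rw [Finset.sum_const, Finset.card_univ, Fintype.card_fin, nsmul_eq_mul,
        mul_inv_cancel₀ hn0.ne']
    · rw [zero_mul]
      exact tApply_nonneg A hA0 _ (fun i => by positivity) i
  obtain ⟨⟨lam, x⟩, hmemK, hmax⟩ :=
    hKcompact.exists_isMaxOn hKne (continuous_fst.continuousOn)
  obtain ⟨hlam0, hx0, hsum, hineq⟩ := hmemK
  dsimp only at hlam0 hx0 hsum hineq
  have hmax' : ∀ p ∈ K, p.1 ≤ lam := fun p hp => hmax hp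
  -- equality holds at the maximizer
  have heq : ∀ i, tApply A x i = lam * x i ^ (k - 1) := by
    by_contra hcon
    push_neg at hcon
    obtain ⟨i0, hne⟩ := hcon
    have hslack : lam * x i0 ^ (k - 1) < tApply A x i0 := lt_of_le_of_ne (hineq i0) (Ne.symm hne)
    classical
    set α : ℝ := Finset.univ.inf' Finset.univ_nonempty
      (fun i => A (tupleCons i fun _ => i0)) with hα
    have hαpos : 0 < α := by
      rw [hα, Finset.lt_inf'_iff]
      exact fun i _ => hA _
    -- choose δ > 0 small
    have hcont : ContinuousAt
        (fun δ : ℝ => (lam + α * δ ^ (k - 1)) * (x i0 + δ) ^ (k - 1)) 0 := by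
      fun_prop
    have h0val : (lam + α * (0:ℝ) ^ (k - 1)) * (x i0 + 0) ^ (k - 1)
        < tApply A x i0 := by
      rw [zero_pow hk1, mul_zero, add_zero, add_zero]
      exact hslack
    obtain ⟨δ, hδlt, hδpos⟩ :=
      (((hcont.tendsto.eventually_lt_const h0val).filter_mono
        (nhdsWithin_le_nhds (s := Set.Ioi (0:ℝ)))).and
        (eventually_mem_nhdsWithin (a := (0:ℝ)) (s := Set.Ioi (0:ℝ)))).exists
    rw [Set.mem_Ioi] at hδpos
    set η : ℝ := α * δ ^ (k - 1) with hη
    have hηpos : 0 < η := by positivity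
    set x' : Fin n → ℝ := fun j => x j + if j = i0 then δ else 0 with hx'
    have hx'0 : ∀ j, 0 ≤ x' j := fun j => by
      dsimp [x']; split <;> [linarith [hx0 j, hδpos]; simpa using hx0 j]
    have hxlex' : ∀ j, x j ≤ x' j := fun j => by
      dsimp [x']; split <;> [linarith; simp]
    -- tApply increases by at least η in each coordinate
    have hincr : ∀ i, tApply A x i + η ≤ tApply A x' i := by
      intro i
      have hdiff : tApply A x' i - tApply A x i
          = ∑ g : Fin (k - 1) → Fin n,
              A (tupleCons i g) * (∏ j, x' (g j) - ∏ j, x (g j)) := by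
        unfold tApply
        rw [← Finset.sum_sub_distrib]
        exact Finset.sum_congr rfl fun g _ => by ring
      have hterm_nonneg : ∀ g : Fin (k - 1) → Fin n,
          0 ≤ A (tupleCons i g) * (∏ j, x' (g j) - ∏ j, x (g j)) := fun g =>
        mul_nonneg (hA0 _) (sub_nonneg.2 (Finset.prod_le_prod (fun j _ => hx0 _)
          (fun j _ => hxlex' _)))
      have hkey : η ≤ A (tupleCons i fun _ => i0) *
          (∏ _j : Fin (k - 1), x' i0 - ∏ _j : Fin (k - 1), x i0) := by
        rw [Finset.prod_const, Finset.prod_const]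
        simp only [Finset.card_univ, Fintype.card_fin]
        have hx'i0 : x' i0 = x i0 + δ := by simp [x']
        rw [hx'i0]
        have hpw : x i0 ^ (k-1) + δ ^ (k-1) ≤ (x i0 + δ) ^ (k-1) :=
          pow_add_pow_le (hx0 i0) hδpos.le hk1
        have hαle : α ≤ A (tupleCons i fun _ => i0) :=
          Finset.inf'_le _ (Finset.mem_univ i)
        calc η = α * δ ^ (k-1) := hη
        _ ≤ A (tupleCons i fun _ => i0) * δ ^ (k-1) :=
            mul_le_mul_of_nonneg_right hαle (by positivity)
        _ ≤ A (tupleCons i fun _ => i0) * ((x i0 + δ) ^ (k-1) - x i0 ^ (k-1)) :=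
            mul_le_mul_of_nonneg_left (by linarith) (hA0 _)
      have hsingle : A (tupleCons i fun _ => i0) *
          (∏ _j : Fin (k - 1), x' i0 - ∏ _j : Fin (k - 1), x i0)
          ≤ ∑ g : Fin (k - 1) → Fin n,
              A (tupleCons i g) * (∏ j, x' (g j) - ∏ j, x (g j)) :=
        Finset.single_le_sum (fun g _ => hterm_nonneg g)
          (Finset.mem_univ (fun _ => i0))
      linarith [hkey.trans hsingle, hdiff]
    -- the perturbed pair is feasible (after normalization), contradiction
    have hx'ineq : ∀ i, (lam + η) * x' i ^ (k - 1) ≤ tApply A x' i := by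
      intro i
      by_cases hii : i = i0
      · subst hii
        have hx'i0 : x' i = x i + δ := by simp [x']
        have h1 : (lam + η) * x' i ^ (k - 1) < tApply A x i := by
          rw [hx'i0]; exact hδlt
        exact le_trans h1.le (tApply_mono A hA0 hx0 hxlex' i)
      · have hx'i : x' i = x i := by simp [x', hii]
        have hxi1 : x i ≤ 1 := by
          calc x i ≤ ∑ j, x j := Finset.single_le_sum (fun j _ => hx0 j) (Finset.mem_univ i)
          _ = 1 := hsum
        have hp1 : x i ^ (k - 1) ≤ 1 := pow_le_one₀ (hx0 i) hxi1
        have : (lam + η) * x' i ^ (k - 1) ≤ lam * x i ^ (k - 1) + η := by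
          rw [hx'i]
          nlinarith [hx0 i, pow_nonneg (hx0 i) (k-1)]
        linarith [hincr i, hineq i]
    -- normalize
    have hsum' : ∑ j, x' j = 1 + δ := by
      simp only [x', Finset.sum_add_distrib, hsum, Finset.sum_ite_eq',
        Finset.mem_univ, if_true]
    have h1δ : (0:ℝ) < 1 + δ := by linarith
    set c : ℝ := (1 + δ)⁻¹ with hc
    have hcpos : 0 < c := by positivity
    have hmem2 : ((lam + η), fun j => c * x' j) ∈ K := by
      rw [hK, Set.mem_setOf_eq]
      refine ⟨by dsimp only; linarith, fun j => by dsimp only; exact mul_nonneg hcpos.le (hx'0 j),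
        ?_, fun i => ?_⟩
      · dsimp only
        rw [← Finset.mul_sum, hsum', hc, inv_mul_cancel₀ h1δ.ne']
      · dsimp only
        rw [tApply_smul, mul_pow]
        calc (lam + η) * (c ^ (k-1) * x' i ^ (k-1))
            = c ^ (k-1) * ((lam + η) * x' i ^ (k-1)) := by ring
        _ ≤ c ^ (k-1) * tApply A x' i :=
            mul_le_mul_of_nonneg_left (hx'ineq i) (by positivity)
    have := hmax' _ hmem2
    simp only at this
    linarith
  -- positivity of lam and x
  obtain ⟨i1, -, hi1⟩ : ∃ i ∈ Finset.univ, 0 < x i := by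
    by_contra hcon
    push_neg at hcon
    have : ∑ i, x i = 0 := Finset.sum_eq_zero fun i _ =>
      le_antisymm (hcon i (Finset.mem_univ i)) (hx0 i)
    rw [hsum] at this; norm_num at this
  have hpos : ∀ i, 0 < tApply A x i := by
    intro i
    unfold tApply
    refine Finset.sum_pos' (fun g _ => mul_nonneg (hA0 _)
      (Finset.prod_nonneg fun j _ => hx0 _)) ⟨fun _ => i1, Finset.mem_univ _, ?_⟩
    refine mul_pos (hA _) ?_
    rw [Finset.prod_const]
    positivity
  have hxpos : ∀ i, 0 < x i := by
    intro i
    have h1 : 0 < lam * x i ^ (k - 1) := (heq i) ▸ hpos i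
    rcases (hx0 i).lt_or_eq with h | h
    · exact h
    · exfalso; rw [← h, zero_pow hk1, mul_zero] at h1; exact lt_irrefl 0 h1
  have hlampos : 0 < lam := by
    have h1 : 0 < lam * x i1 ^ (k - 1) := (heq i1) ▸ hpos i1
    nlinarith [pow_pos (hxpos i1) (k-1)]
  exact ⟨lam, x, hlampos, hxpos, hsum, heq⟩

/-- Collatz–Wielandt bound: any eigenvalue of `T ≤ A` is dominated by an
eigenvalue of `A` having a positive eigenvector. -/
lemma cw_bound (hk : 2 ≤ k) (hn : 1 ≤ n) {T A : (Fin k → Fin n) → ℝ}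
    (hT : ∀ f, 0 ≤ T f) (hTA : ∀ f, T f ≤ A f) {lam : ℝ} {x : Fin n → ℝ}
    (hx : ∀ i, 0 < x i) (heq : ∀ i, tApply A x i = lam * x i ^ (k - 1))
    {mu : ℂ} (hmu : IsEig T mu) : ‖mu‖ ≤ lam := by
  haveI : Nonempty (Fin n) := ⟨⟨0, hn⟩⟩
  have hA0 : ∀ f, 0 ≤ A f := fun f => (hT f).trans (hTA f)
  have hk1 : k - 1 ≠ 0 := by omega
  obtain ⟨y, hy0, hyeq⟩ := hmu
  obtain ⟨i0, -, hmaxr⟩ := Finset.exists_max_image Finset.univ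
    (fun i => ‖y i‖ / x i) Finset.univ_nonempty
  set t : ℝ := ‖y i0‖ / x i0 with ht
  have hybnd : ∀ j, ‖y j‖ ≤ t * x j := by
    intro j
    have := hmaxr j (Finset.mem_univ j)
    rw [div_le_iff₀ (hx j)] at this
    linarith [this]
  have hyi0 : ‖y i0‖ = t * x i0 := by
    rw [ht, div_mul_cancel₀ _ (hx i0).ne']
  have htpos : 0 < t := by
    obtain ⟨j, hj⟩ : ∃ j, y j ≠ 0 := by
      by_contra hcon; push_neg at hcon
      exact hy0 (funext fun j => hcon j)
    have h1 : 0 < ‖y j‖ := by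
      simpa using (norm_pos_iff.2 hj)
    have h2 : 0 < ‖y j‖ / x j := div_pos h1 (hx j)
    exact lt_of_lt_of_le h2 (hmaxr j (Finset.mem_univ j))
  have hchain : ‖mu‖ * (t * x i0) ^ (k - 1) ≤ lam * (t * x i0) ^ (k - 1) := by
    have h1 : ‖mu‖ * (t * x i0) ^ (k - 1)
        = ‖mu * y i0 ^ (k - 1)‖ := by
      rw [norm_mul, norm_pow, hyi0]
    have h2 : ‖mu * y i0 ^ (k - 1)‖
        ≤ tApply T (fun j => ‖y j‖) i0 := by
      rw [← hyeq i0]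
      exact abs_tApply_le T hT y i0
    have h3 : tApply T (fun j => ‖y j‖) i0
        ≤ tApply A (fun j => ‖y j‖) i0 :=
      tApply_le_tApply_of_le hTA (fun j => norm_nonneg _) i0
    have h4 : tApply A (fun j => ‖y j‖) i0
        ≤ tApply A (fun j => t * x j) i0 :=
      tApply_mono A hA0 (fun j => norm_nonneg _) hybnd i0
    have h5 : tApply A (fun j => t * x j) i0 = t ^ (k - 1) * tApply A x i0 :=
      tApply_smul A t x i0
    have h6 : t ^ (k - 1) * tApply A x i0 = lam * (t * x i0) ^ (k - 1) := by
      rw [heq i0, mul_pow]; ring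
    calc ‖mu‖ * (t * x i0) ^ (k - 1)
        = ‖mu * y i0 ^ (k - 1)‖ := h1
    _ ≤ tApply T (fun j => ‖y j‖) i0 := h2
    _ ≤ tApply A (fun j => ‖y j‖) i0 := h3
    _ ≤ tApply A (fun j => t * x j) i0 := h4
    _ = t ^ (k - 1) * tApply A x i0 := h5
    _ = lam * (t * x i0) ^ (k - 1) := h6
  have hppos : 0 < (t * x i0) ^ (k - 1) := pow_pos (mul_pos htpos (hx i0)) _
  exact le_of_mul_le_mul_right hchain hppos

end PFAux

/-- (Yang–Yang) For a nonnegative tensor `T` of order `k ≥ 2`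
and dimension `n ≥ 1`, the spectral radius `ρ(T)` is an `H⁺`-eigenvalue: it is
an eigenvalue admitting a nonzero nonnegative eigenvector. -/
theorem specRad_is_Hplus_eigenvalue {k n : ℕ} (hk : 2 ≤ k) (hn : 1 ≤ n)
    (T : (Fin k → Fin n) → ℝ) (hT : ∀ f, 0 ≤ T f) :
    ∃ x : Fin n → ℝ, x ≠ 0 ∧ (∀ i, 0 ≤ x i) ∧
      ∀ i, tApply T x i = specRad T * x i ^ (k - 1) := by
  haveI : Nonempty (Fin n) := ⟨⟨0, hn⟩⟩
  have hk1 : k - 1 ≠ 0 := by omega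
  -- perturbed positive tensors
  set A : ℕ → (Fin k → Fin n) → ℝ := fun m f => T f + 1 / (m + 1) with hAdef
  have hApos : ∀ m f, 0 < A m f := fun m f => by
    have : (0:ℝ) < 1 / (m + 1) := by positivity
    dsimp only [A]; linarith [hT f]
  have key : ∀ m : ℕ, ∃ lam x, 0 < lam ∧ (∀ i, 0 < x i) ∧ (∑ i, x i = 1) ∧
      ∀ i, tApply (A m) x i = lam * x i ^ (k - 1) :=
    fun m => posPF hk hn (A m) (hApos m)
  choose lam x hlam hxpos hsum heqm using key
  -- uniform bound on the eigenvalues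
  obtain ⟨f0⟩ : Nonempty (Fin k → Fin n) := inferInstance
  set M : ℝ := Finset.univ.sup' ⟨f0, Finset.mem_univ f0⟩ T with hM
  have hMle : ∀ f, T f ≤ M := fun f => Finset.le_sup' T (Finset.mem_univ f)
  have hM0 : 0 ≤ M := (hT f0).trans (hMle f0)
  set C : ℝ := (M + 1) * (Fintype.card (Fin (k - 1) → Fin n)) * n ^ (k - 1) with hC
  have hlamle : ∀ m, lam m ≤ C := by
    intro m
    refine cw_apriori_bound hk hn (A := A m) (M := M + 1) ?_ (by linarith) (hlam m).le
      (fun i => (hxpos m i).le) (hsum m) (fun i => (heqm m i).ge)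
    intro f
    have h1 : (1:ℝ) / (m + 1) ≤ 1 := by
      rw [div_le_one (by positivity)]
      have : (0:ℝ) ≤ m := Nat.cast_nonneg m
      linarith
    dsimp only [A]; linarith [hMle f]
  -- compactness: extract a convergent subsequence
  set p : ℕ → ℝ × (Fin n → ℝ) := fun m => (lam m, x m) with hp
  have hmemIcc : ∀ m, p m ∈ Set.Icc ((0:ℝ), (0 : Fin n → ℝ)) (C, 1) := by
    intro m
    refine ⟨⟨(hlam m).le, fun i => (hxpos m i).le⟩, ⟨hlamle m, fun i => ?_⟩⟩
    calc x m i ≤ ∑ j, x m j :=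
          Finset.single_le_sum (fun j _ => (hxpos m j).le) (Finset.mem_univ i)
    _ = 1 := hsum m
  obtain ⟨⟨lam0, x0⟩, -, φ, hφ, htend⟩ := isCompact_Icc.tendsto_subseq hmemIcc
  have hlamtend : Filter.Tendsto (fun m => lam (φ m)) Filter.atTop (nhds lam0) :=
    (continuous_fst.tendsto _).comp htend
  have hxtendf : Filter.Tendsto (fun m => x (φ m)) Filter.atTop (nhds x0) :=
    (continuous_snd.tendsto _).comp htend
  have hxtend : ∀ i, Filter.Tendsto (fun m => x (φ m) i) Filter.atTop (nhds (x0 i)) :=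
    fun i => ((continuous_apply i).tendsto _).comp hxtendf
  have hx0nonneg : ∀ i, 0 ≤ x0 i := fun i =>
    ge_of_tendsto (hxtend i) (Filter.Eventually.of_forall fun m => (hxpos _ i).le)
  have hlam0nonneg : 0 ≤ lam0 :=
    ge_of_tendsto hlamtend (Filter.Eventually.of_forall fun m => (hlam _).le)
  have hsum0 : ∑ i, x0 i = 1 := by
    have h1 : Filter.Tendsto (fun m => ∑ i, x (φ m) i) Filter.atTop (nhds (∑ i, x0 i)) :=
      tendsto_finset_sum _ fun i _ => hxtend i
    have h2 : (fun m => ∑ i, x (φ m) i) = fun _ => (1:ℝ) := funext fun m => hsum (φ m)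
    rw [h2] at h1
    exact tendsto_nhds_unique h1 tendsto_const_nhds
  -- pass the eigenvalue equation to the limit
  have heq0 : ∀ i, tApply T x0 i = lam0 * x0 i ^ (k - 1) := by
    intro i
    set S : (Fin n → ℝ) → ℝ := fun z => ∑ g : Fin (k-1) → Fin n, ∏ j, z (g j) with hS
    have hScont : Continuous S :=
      continuous_finset_sum _ fun g _ => continuous_finset_prod _ fun j _ => continuous_apply _
    have h2 : Filter.Tendsto (fun m => tApply T (x (φ m)) i) Filter.atTop
        (nhds (tApply T x0 i)) := ((continuous_tApply T i).tendsto _).comp hxtendf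
    have h3 : Filter.Tendsto (fun m => (1:ℝ)/(φ m + 1)) Filter.atTop (nhds 0) :=
      tendsto_one_div_add_atTop_nhds_zero_nat.comp hφ.tendsto_atTop
    have h4 : Filter.Tendsto (fun m => S (x (φ m))) Filter.atTop (nhds (S x0)) :=
      (hScont.tendsto _).comp hxtendf
    have hL : Filter.Tendsto (fun m => tApply (A (φ m)) (x (φ m)) i) Filter.atTop
        (nhds (tApply T x0 i)) := by
      have h5 := h2.add (h3.mul h4)
      rw [zero_mul, add_zero] at h5
      refine h5.congr fun m => ?_
      exact (tApply_add_const T _ _ i).symm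
    have hR : Filter.Tendsto (fun m => tApply (A (φ m)) (x (φ m)) i) Filter.atTop
        (nhds (lam0 * x0 i ^ (k - 1))) := by
      have h6 : Filter.Tendsto (fun m => lam (φ m) * x (φ m) i ^ (k - 1)) Filter.atTop
          (nhds (lam0 * x0 i ^ (k - 1))) := hlamtend.mul ((hxtend i).pow _)
      exact h6.congr fun m => (heqm (φ m) i).symm
    exact tendsto_nhds_unique hL hR
  -- lam0 belongs to the eigenvalue-modulus set
  have hmem : lam0 ∈ {r : ℝ | ∃ lamc : ℂ, IsEig T lamc ∧ ‖lamc‖ = r} := by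
    refine ⟨(lam0 : ℂ), ⟨fun i => (x0 i : ℂ), ?_, fun i => ?_⟩, ?_⟩
    · intro hzero
      have hz : ∀ i, x0 i = 0 := fun i => by
        have := congrFun hzero i
        simpa [Complex.ofReal_eq_zero] using this
      rw [Finset.sum_eq_zero (fun i _ => hz i)] at hsum0
      norm_num at hsum0
    · have hcast : ((lam0:ℂ) * (x0 i:ℂ) ^ (k-1)) = ((lam0 * x0 i ^ (k-1) : ℝ) : ℂ) := by
        push_cast; ring
      rw [hcast, ← heq0 i]
      unfold tApply
      push_cast
      rfl
    · rw [Complex.norm_real, Real.norm_of_nonneg hlam0nonneg]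
  -- lam0 dominates all eigenvalue moduli
  have hub : ∀ r ∈ {r : ℝ | ∃ lamc : ℂ, IsEig T lamc ∧ ‖lamc‖ = r}, r ≤ lam0 := by
    rintro r ⟨mu, hmu, rfl⟩
    refine ge_of_tendsto hlamtend (Filter.Eventually.of_forall fun m => ?_)
    refine cw_bound hk hn hT ?_ (hxpos (φ m)) (heqm (φ m)) hmu
    intro f
    have : (0:ℝ) < 1 / (φ m + 1) := by positivity
    dsimp only [A]; linarith
  have hspec : specRad T = lam0 := by
    unfold specRad
    exact le_antisymm (csSup_le ⟨lam0, hmem⟩ hub)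
      (le_csSup ⟨lam0, fun r hr => hub r hr⟩ hmem)
  refine ⟨x0, ?_, hx0nonneg, fun i => ?_⟩
  · intro h
    rw [h] at hsum0
    simp at hsum0
  · rw [hspec]
    exact heq0 i
end

section
/- Let G = G_1(v_2) * G_2(u) and G' = G_1(v_1) * G_2(u) be connected k-uniform hypergraphs, where G' is obtained from G by relocating the sub-hypergraph G_2 rooted at u from v_2 to v_1. If there exists a Perron vector x of G such that x_{v_1} ≥ x_{v_2}, then ρ(G') > ρ(G). -/
open Finset

set_option linter.unusedSectionVars false

noncomputable section RelocAux
namespace RelocAux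
open Finset

variable {V : Type*} [Fintype V] [DecidableEq V] {k : ℕ}

lemma tupleCons_zero (hk : 0 < k) (i : V) (g : Fin (k-1) → V) :
    tupleCons i g ⟨0, hk⟩ = i := by simp [tupleCons]

lemma tupleCons_succ (hk : 0 < k) (i : V) (g : Fin (k-1) → V) (j : Fin (k-1)) :
    tupleCons i g ⟨j.1+1, by omega⟩ = g j := by
  have : ¬ ((⟨j.1+1, by omega⟩ : Fin k) : ℕ) = 0 := by simp
  simp only [tupleCons, dif_neg this]
  congr 1

lemma image_tupleCons (hk : 0 < k) (i : V) (g : Fin (k-1) → V) :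
    Finset.image (tupleCons i g) Finset.univ = insert i (Finset.image g Finset.univ) := by
  ext v
  simp only [mem_image, mem_insert, mem_univ, true_and]
  constructor
  · rintro ⟨j, rfl⟩
    rcases Nat.eq_zero_or_pos j.1 with h | h
    · left; simp [tupleCons, h]
    · right
      refine ⟨⟨j.1 - 1, by have := j.isLt; omega⟩, ?_⟩
      have hne : ¬ (j : ℕ) = 0 := by omega
      simp only [tupleCons, dif_neg hne]
  · rintro (rfl | ⟨j, rfl⟩)
    · exact ⟨⟨0, hk⟩, tupleCons_zero hk _ _⟩
    · exact ⟨⟨j.1+1, by have := j.isLt; omega⟩, tupleCons_succ hk _ _ _⟩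

lemma injective_tupleCons_iff (hk : 0 < k) (i : V) (g : Fin (k-1) → V) :
    Function.Injective (tupleCons i g) ↔ Function.Injective g ∧ ∀ j, g j ≠ i := by
  constructor
  · intro h
    constructor
    · intro j1 j2 hj
      have := h (a₁ := ⟨j1.1+1, by have := j1.isLt; omega⟩) (a₂ := ⟨j2.1+1, by have := j2.isLt; omega⟩)
        (by rw [tupleCons_succ hk, tupleCons_succ hk, hj])
      have h2 := congrArg Fin.val this
      simp only [] at h2
      exact Fin.ext (by omega)
    · intro j hj
      have := h (a₁ := ⟨j.1+1, by have := j.isLt; omega⟩) (a₂ := ⟨0, hk⟩)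
        (by rw [tupleCons_succ hk, tupleCons_zero hk, hj])
      simp at this
  · rintro ⟨hg, hne⟩ j1 j2 hj
    rcases Nat.eq_zero_or_pos j1.1 with h1 | h1 <;> rcases Nat.eq_zero_or_pos j2.1 with h2 | h2
    · exact Fin.ext (by omega)
    · exfalso
      have hne2 : ¬ (j2 : ℕ) = 0 := by omega
      simp only [tupleCons, dif_pos h1, dif_neg hne2] at hj
      exact hne _ hj.symm
    · exfalso
      have hne1 : ¬ (j1 : ℕ) = 0 := by omega
      simp only [tupleCons, dif_pos h2, dif_neg hne1] at hj
      exact hne _ hj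
    · have hne1 : ¬ (j1 : ℕ) = 0 := by omega
      have hne2 : ¬ (j2 : ℕ) = 0 := by omega
      simp only [tupleCons, dif_neg hne1, dif_neg hne2] at hj
      have h3 := congrArg Fin.val (hg hj)
      simp only [] at h3
      exact Fin.ext (by omega)

end RelocAux

namespace RelocAux
open Finset

variable {V : Type*} [Fintype V] [DecidableEq V] {k : ℕ}

/-- Edge-sum form of the tensor application. -/
def tA (H : UHypergraph V k) (y : V → ℝ) (i : V) : ℝ :=
  ∑ e ∈ H.edges.filter (fun e => i ∈ e), ∏ v ∈ e.erase i, y v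

def eP (H : UHypergraph V k) (y : V → ℝ) : ℝ := ∑ e ∈ H.edges, ∏ v ∈ e, y v

lemma card_fiber (s : Finset V) (hs : s.card = k - 1) :
    (Finset.univ.filter (fun g : Fin (k-1) → V =>
      Function.Injective g ∧ Finset.image g Finset.univ = s)).card = Nat.factorial (k-1) := by
  have : Fintype.card {g : Fin (k-1) → V //
      Function.Injective g ∧ Finset.image g Finset.univ = s} = Nat.factorial (k-1) := by
    have e : {g : Fin (k-1) → V // Function.Injective g ∧ Finset.image g Finset.univ = s}
        ≃ (Fin (k-1) ↪ {v : V // v ∈ s}) := by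
      refine
        { toFun := fun g => ⟨fun j => ⟨g.1 j, by
            have := Finset.mem_image_of_mem g.1 (Finset.mem_univ j); rwa [g.2.2] at this⟩, by
            intro a b hab
            exact g.2.1 (Subtype.ext_iff.mp hab)⟩
          invFun := fun f => ⟨fun j => (f j : V), ?_, ?_⟩
          left_inv := fun g => by ext j; rfl
          right_inv := fun f => by ext j; rfl }
      · intro a b hab
        exact f.injective (Subtype.ext hab)
      · have hsub : Finset.image (fun j => ((f j : V))) Finset.univ ⊆ s := by
          intro v hv
          simp only [mem_image, mem_univ, true_and] at hv
          obtain ⟨j, rfl⟩ := hv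
          exact (f j).2
        refine Finset.eq_of_subset_of_card_le hsub ?_
        rw [hs, Finset.card_image_of_injective _ (fun a b hab => f.injective (Subtype.ext hab))]
        simp
    rw [Fintype.card_congr e, Fintype.card_embedding_eq, Fintype.card_coe, hs,
      Fintype.card_fin, Nat.descFactorial_self]
  rw [← this, Fintype.card_subtype]

lemma tApply_eq_tA (hk : 2 ≤ k) (H : UHypergraph V k) (y : V → ℝ) (i : V) :
    tApply (adjTensor H) y i = tA H y i := by
  classical
  have hk0 : 0 < k := by omega
  unfold tApply adjTensor tA
  have hsplit :
      ∑ g : Fin (k-1) → V,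
        (if Function.Injective (tupleCons i g) ∧
            Finset.image (tupleCons i g) Finset.univ ∈ H.edges
          then ((Nat.factorial (k - 1) : ℝ))⁻¹ else 0) * ∏ j, y (g j)
      = ∑ g ∈ Finset.univ.filter (fun g : Fin (k-1) → V =>
          Function.Injective (tupleCons i g) ∧
            Finset.image (tupleCons i g) Finset.univ ∈ H.edges),
          ((Nat.factorial (k - 1) : ℝ))⁻¹ * ∏ j, y (g j) := by
    rw [Finset.sum_filter]
    exact Finset.sum_congr rfl (fun g _ => by split <;> simp
      )
  rw [hsplit]
  rw [← Finset.sum_fiberwise_of_maps_to (g := fun g => Finset.image (tupleCons i g) Finset.univ)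
    (t := H.edges.filter (fun e => i ∈ e)) ?_ _]
  · refine Finset.sum_congr rfl (fun e he => ?_)
    simp only [Finset.mem_filter] at he
    obtain ⟨heE, hie⟩ := he
    have hecard : e.card = k := H.uniform e heE
    -- the inner fiber
    have hfib : (Finset.univ.filter (fun g : Fin (k-1) → V =>
          Function.Injective (tupleCons i g) ∧
            Finset.image (tupleCons i g) Finset.univ ∈ H.edges)).filter
          (fun g => Finset.image (tupleCons i g) Finset.univ = e)
        = Finset.univ.filter (fun g : Fin (k-1) → V =>
            Function.Injective g ∧ Finset.image g Finset.univ = e.erase i) := by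
      ext g
      simp only [Finset.mem_filter, Finset.mem_univ, true_and]
      constructor
      · rintro ⟨⟨hinj, _⟩, himg⟩
        obtain ⟨hginj, hgne⟩ := (injective_tupleCons_iff hk0 i g).mp hinj
        refine ⟨hginj, ?_⟩
        rw [image_tupleCons hk0] at himg
        have hni : i ∉ Finset.image g Finset.univ := by
          simp only [mem_image, mem_univ, true_and]
          rintro ⟨j, hj⟩; exact hgne j hj
        rw [← himg, Finset.erase_insert hni]
      · rintro ⟨hginj, himg⟩
        have hgne : ∀ j, g j ≠ i := by
          intro j hj
          have h1 : i ∈ Finset.image g Finset.univ := by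
            rw [← hj]; exact Finset.mem_image_of_mem _ (Finset.mem_univ j)
          rw [himg] at h1
          exact (Finset.notMem_erase i e) h1
        have hinj := (injective_tupleCons_iff hk0 i g).mpr ⟨hginj, hgne⟩
        have himg2 : Finset.image (tupleCons i g) Finset.univ = e := by
          rw [image_tupleCons hk0, himg, Finset.insert_erase hie]
        exact ⟨⟨hinj, himg2 ▸ heE⟩, himg2⟩
    rw [hfib]
    -- all summands equal: product over image
    have hprod : ∀ g ∈ Finset.univ.filter (fun g : Fin (k-1) → V =>
        Function.Injective g ∧ Finset.image g Finset.univ = e.erase i),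
        ((Nat.factorial (k - 1) : ℝ))⁻¹ * ∏ j, y (g j)
          = ((Nat.factorial (k - 1) : ℝ))⁻¹ * ∏ v ∈ e.erase i, y v := by
      intro g hg
      simp only [Finset.mem_filter, Finset.mem_univ, true_and] at hg
      rw [← hg.2, Finset.prod_image (fun a _ b _ hab => hg.1 hab)]
    rw [Finset.sum_congr rfl hprod, Finset.sum_const,
      card_fiber (e.erase i) (by rw [Finset.card_erase_of_mem hie, hecard]), nsmul_eq_mul]
    rw [← mul_assoc, mul_inv_cancel₀ (by positivity), one_mul]
  · intro g hg
    simp only [Finset.mem_filter, Finset.mem_univ, true_and] at hg ⊢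
    refine ⟨hg.2, ?_⟩
    rw [image_tupleCons hk0]
    exact Finset.mem_insert_self _ _

end RelocAux

namespace RelocAux
open Finset

variable {V : Type*} [Fintype V] [DecidableEq V] {k : ℕ}

lemma tA_nonneg (H : UHypergraph V k) {y : V → ℝ} (hy : ∀ v, 0 ≤ y v) (i : V) :
    0 ≤ tA H y i :=
  Finset.sum_nonneg fun e _ => Finset.prod_nonneg fun v _ => hy v

lemma sum_mul_tA (H : UHypergraph V k) (y : V → ℝ) :
    ∑ i, y i * tA H y i = (k : ℝ) * eP H y := by
  unfold tA eP
  have h1 : ∀ i : V, y i * ∑ e ∈ H.edges.filter (fun e => i ∈ e), ∏ v ∈ e.erase i, y v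
      = ∑ e ∈ H.edges, (if i ∈ e then ∏ v ∈ e, y v else 0) := by
    intro i
    rw [Finset.mul_sum, Finset.sum_filter]
    refine Finset.sum_congr rfl fun e _ => ?_
    split
    · next h => rw [Finset.mul_prod_erase _ _ h]
    · rfl
  rw [Finset.sum_congr rfl (fun i _ => h1 i), Finset.sum_comm, Finset.mul_sum]
  refine Finset.sum_congr rfl fun e he => ?_
  rw [Finset.sum_ite_mem, Finset.univ_inter, Finset.sum_const, nsmul_eq_mul,
    H.uniform e he]

lemma eP_smul (H : UHypergraph V k) (c : ℝ) (y : V → ℝ) :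
    eP H (fun v => c * y v) = c ^ k * eP H y := by
  unfold eP
  rw [Finset.mul_sum]
  refine Finset.sum_congr rfl fun e he => ?_
  rw [Finset.prod_mul_distrib, Finset.prod_const, H.uniform e he]

lemma tA_smul (H : UHypergraph V k) (c : ℝ) (y : V → ℝ) (i : V) :
    tA H (fun v => c * y v) i = c ^ (k-1) * tA H y i := by
  unfold tA
  rw [Finset.mul_sum]
  refine Finset.sum_congr rfl fun e he => ?_
  simp only [Finset.mem_filter] at he
  rw [Finset.prod_mul_distrib, Finset.prod_const, Finset.card_erase_of_mem he.2,
    H.uniform e he.1]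

def cC (H : UHypergraph V k) (y : V → ℝ) (i j : V) : ℝ :=
  ∑ e ∈ H.edges.filter (fun e => i ∈ e ∧ j ∈ e), ∏ v ∈ (e.erase i).erase j, y v

def cB (H : UHypergraph V k) (y : V → ℝ) (i j : V) : ℝ :=
  ∑ e ∈ H.edges.filter (fun e => i ∈ e ∧ j ∉ e), ∏ v ∈ e.erase i, y v

def cD (H : UHypergraph V k) (y : V → ℝ) (i j : V) : ℝ :=
  ∑ e ∈ H.edges.filter (fun e => i ∉ e ∧ j ∉ e), ∏ v ∈ e, y v

lemma cC_symm (H : UHypergraph V k) (y : V → ℝ) (i j : V) : cC H y i j = cC H y j i := by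
  unfold cC
  rw [Finset.filter_congr (fun e _ => (and_comm : (i ∈ e ∧ j ∈ e) ↔ _))]
  exact Finset.sum_congr rfl fun e _ => by rw [Finset.erase_right_comm]

lemma cC_nonneg (H : UHypergraph V k) {y : V → ℝ} (hy : ∀ v, 0 ≤ y v) (i j : V) :
    0 ≤ cC H y i j := Finset.sum_nonneg fun e _ => Finset.prod_nonneg fun v _ => hy v

lemma cB_nonneg (H : UHypergraph V k) {y : V → ℝ} (hy : ∀ v, 0 ≤ y v) (i j : V) :
    0 ≤ cB H y i j := Finset.sum_nonneg fun e _ => Finset.prod_nonneg fun v _ => hy v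

lemma tA_split (H : UHypergraph V k) (y : V → ℝ) {i j : V} (hij : i ≠ j) :
    tA H y i = cB H y i j + y j * cC H y i j := by
  unfold tA cB cC
  rw [Finset.mul_sum]
  have hsplit : H.edges.filter (fun e => i ∈ e)
      = H.edges.filter (fun e => i ∈ e ∧ j ∉ e) ∪ H.edges.filter (fun e => i ∈ e ∧ j ∈ e) := by
    rw [← Finset.filter_or]
    exact Finset.filter_congr fun e _ => by tauto
  rw [hsplit, Finset.sum_union]
  · congr 1
    refine Finset.sum_congr rfl fun e he => ?_
    simp only [Finset.mem_filter] at he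
    rw [Finset.mul_prod_erase _ _ (Finset.mem_erase.mpr ⟨Ne.symm hij, he.2.2⟩)]
  · exact Finset.disjoint_filter.mpr fun e _ h1 h2 => h1.2 h2.2

lemma eP_split (H : UHypergraph V k) (y : V → ℝ) {i j : V} (hij : i ≠ j) :
    eP H y = y i * y j * cC H y i j + y i * cB H y i j + y j * cB H y j i + cD H y i j := by
  unfold eP
  have hsplit : H.edges = H.edges.filter (fun e => i ∈ e)
      ∪ H.edges.filter (fun e => i ∉ e ∧ j ∈ e) ∪ H.edges.filter (fun e => i ∉ e ∧ j ∉ e) := by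
    rw [← Finset.filter_or, ← Finset.filter_or]
    conv_lhs => rw [← Finset.filter_true (s := H.edges)]
    exact Finset.filter_congr fun e _ => by tauto
  conv_lhs => rw [hsplit]
  rw [Finset.sum_union, Finset.sum_union]
  · have h1 : ∑ e ∈ H.edges.filter (fun e => i ∈ e), ∏ v ∈ e, y v = y i * tA H y i := by
      unfold tA
      rw [Finset.mul_sum]
      exact Finset.sum_congr rfl fun e he => by
        rw [Finset.mul_prod_erase _ _ (Finset.mem_filter.mp he).2]
    have h2 : ∑ e ∈ H.edges.filter (fun e => i ∉ e ∧ j ∈ e), ∏ v ∈ e, y v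
        = y j * cB H y j i := by
      unfold cB
      rw [Finset.mul_sum,
        Finset.filter_congr (fun e _ => (and_comm : (i ∉ e ∧ j ∈ e) ↔ _))]
      exact Finset.sum_congr rfl fun e he => by
        rw [Finset.mul_prod_erase _ _ (Finset.mem_filter.mp he).2.1]
    rw [h1, h2, tA_split H y hij]
    unfold cD
    ring
  · exact Finset.disjoint_filter.mpr fun e _ h1 h2 => h2.1 h1
  · refine Finset.disjoint_union_left.mpr ⟨?_, ?_⟩ <;>
      exact Finset.disjoint_filter.mpr (by tauto)

end RelocAux

namespace RelocAux
open Finset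

variable {V : Type*} [Fintype V] [DecidableEq V] {k : ℕ}

lemma cC_congr (H : UHypergraph V k) {y z : V → ℝ} {i j : V}
    (h : ∀ v, v ≠ i → v ≠ j → y v = z v) : cC H y i j = cC H z i j := by
  unfold cC
  refine Finset.sum_congr rfl fun e _ => Finset.prod_congr rfl fun v hv => ?_
  simp only [Finset.mem_erase] at hv
  exact h v hv.2.1 hv.1

lemma cB_congr (H : UHypergraph V k) {y z : V → ℝ} {i j : V}
    (h : ∀ v, v ≠ i → v ≠ j → y v = z v) : cB H y i j = cB H z i j := by
  unfold cB
  refine Finset.sum_congr rfl fun e he => Finset.prod_congr rfl fun v hv => ?_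
  simp only [Finset.mem_filter] at he
  simp only [Finset.mem_erase] at hv
  exact h v hv.1 (fun hvj => he.2.2 (hvj ▸ hv.2))

lemma cD_congr (H : UHypergraph V k) {y z : V → ℝ} {i j : V}
    (h : ∀ v, v ≠ i → v ≠ j → y v = z v) : cD H y i j = cD H z i j := by
  unfold cD
  refine Finset.sum_congr rfl fun e he => Finset.prod_congr rfl fun v hv => ?_
  simp only [Finset.mem_filter] at he
  exact h v (fun hvi => he.2.1 (hvi ▸ hv)) (fun hvj => he.2.2 (hvj ▸ hv))

/-- The compact search space. -/
def SS (V : Type*) [Fintype V] (k : ℕ) : Set (V → ℝ) :=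
  {y | (∀ v, 0 ≤ y v) ∧ ∑ v, y v ^ k = 1}

lemma sum_comp_update (f : ℝ → ℝ) (y : V → ℝ) (i : V) (a : ℝ) :
    ∑ v, f ((Function.update y i a) v) = ∑ v, f (y v) - f (y i) + f a := by
  have hfun : (fun v => f ((Function.update y i a) v))
      = Function.update (fun v => f (y v)) i (f a) := by
    funext v
    by_cases h : v = i
    · subst h; simp
    · simp [Function.update_of_ne h]
  rw [hfun, Finset.sum_update_of_mem (Finset.mem_univ i), Finset.sdiff_singleton_eq_erase,
    ← Finset.sum_erase_eq_sub (Finset.mem_univ i)]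
  ring

/-- `u^k - x^k ≤ (u - x) * (k * u^(k-1))` for `0 ≤ x ≤ u`. -/
lemma pow_sub_pow_le (hk : 1 ≤ k) {x u : ℝ} (hx : 0 ≤ x) (hxu : x ≤ u) :
    u ^ k - x ^ k ≤ (u - x) * ((k : ℝ) * u ^ (k-1)) := by
  rw [← geom_sum₂_mul]
  have hsum : (∑ m ∈ Finset.range k, u ^ m * x ^ (k - 1 - m)) ≤ (k : ℝ) * u ^ (k-1) := by
    calc (∑ m ∈ Finset.range k, u ^ m * x ^ (k - 1 - m))
        ≤ ∑ m ∈ Finset.range k, u ^ (k-1) := by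
          refine Finset.sum_le_sum fun m hm => ?_
          simp only [Finset.mem_range] at hm
          calc u ^ m * x ^ (k-1-m) ≤ u ^ m * u ^ (k-1-m) := by
                have := pow_le_pow_left₀ hx hxu (k-1-m)
                have hu : (0:ℝ) ≤ u ^ m := pow_nonneg (hx.trans hxu) m
                nlinarith [pow_nonneg hx (k-1-m)]
            _ = u ^ (k-1) := by rw [← pow_add]; congr 1; omega
      _ = (k : ℝ) * u ^ (k-1) := by rw [Finset.sum_const, Finset.card_range, nsmul_eq_mul]
  have hux : 0 ≤ u - x := by linarith
  calc (∑ m ∈ Finset.range k, u ^ m * x ^ (k - 1 - m)) * (u - x)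
      ≤ ((k : ℝ) * u ^ (k-1)) * (u - x) := mul_le_mul_of_nonneg_right hsum hux
    _ = (u - x) * ((k : ℝ) * u ^ (k-1)) := by ring

/-- `(u - x) * (k * x^(k-1)) ≤ u^k - x^k` for `0 ≤ x ≤ u`. -/
lemma le_pow_sub_pow (hk : 1 ≤ k) {x u : ℝ} (hx : 0 ≤ x) (hxu : x ≤ u) :
    (u - x) * ((k : ℝ) * x ^ (k-1)) ≤ u ^ k - x ^ k := by
  rw [← geom_sum₂_mul]
  have hsum : (k : ℝ) * x ^ (k-1) ≤ (∑ m ∈ Finset.range k, u ^ m * x ^ (k - 1 - m)) := by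
    calc (k : ℝ) * x ^ (k-1) = ∑ m ∈ Finset.range k, x ^ (k-1) := by
          rw [Finset.sum_const, Finset.card_range, nsmul_eq_mul]
      _ ≤ ∑ m ∈ Finset.range k, u ^ m * x ^ (k - 1 - m) := by
          refine Finset.sum_le_sum fun m hm => ?_
          simp only [Finset.mem_range] at hm
          calc x ^ (k-1) = x ^ m * x ^ (k-1-m) := by rw [← pow_add]; congr 1; omega
            _ ≤ u ^ m * x ^ (k-1-m) := by
                have := pow_le_pow_left₀ hx hxu m
                have := pow_nonneg hx (k-1-m)
                nlinarith
  have hux : 0 ≤ u - x := by linarith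
  calc (u - x) * ((k : ℝ) * x ^ (k-1)) = ((k : ℝ) * x ^ (k-1)) * (u - x) := by ring
    _ ≤ (∑ m ∈ Finset.range k, u ^ m * x ^ (k - 1 - m)) * (u - x) :=
        mul_le_mul_of_nonneg_right hsum hux

end RelocAux

namespace RelocAux
open Finset

variable {V : Type*} [Fintype V] [DecidableEq V] {k : ℕ}

lemma no_improve (hk : 3 ≤ k) (H : UHypergraph V k) {y : V → ℝ} (hyS : y ∈ SS V k)
    (hmax : ∀ z ∈ SS V k, eP H z ≤ eP H y) {i j : V} (hij : i ≠ j) (hj : 0 < y j) :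
    y j ^ (k-1) * tA H y i ≤ y i ^ (k-1) * tA H y j := by
  by_contra hcon
  push_neg at hcon
  obtain ⟨hy0, hy1⟩ := hyS
  have hk0 : (k : ℝ) ≠ 0 := by positivity
  have hk1 : 1 ≤ k := by omega
  set yi := y i with hyi
  set yj := y j with hyj
  set Bi := cB H y i j with hBi
  set Bj := cB H y j i with hBj
  set C := cC H y i j with hC
  have htAi : tA H y i = Bi + yj * C := tA_split H y hij
  have htAj : tA H y j = Bj + yi * C := by
    rw [tA_split H y (Ne.symm hij), ← cC_symm]
  -- the perturbation curves
  set a : ℝ → ℝ := fun t => (yi ^ k + t) ^ (k:ℝ)⁻¹ with ha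
  set b : ℝ → ℝ := fun t => (yj ^ k - t) ^ (k:ℝ)⁻¹ with hb
  have hyi0 : 0 ≤ yi := hy0 i
  have ha0 : a 0 = yi := by
    simp only [ha, add_zero]
    exact Real.pow_rpow_inv_natCast hyi0 (by omega)
  have hb0 : b 0 = yj := by
    simp only [hb, sub_zero]
    exact Real.pow_rpow_inv_natCast hj.le (by omega)
  -- the continuous function controlling the sign of the increment
  set F : ℝ → ℝ := fun t => b t ^ (k-1) * (Bi + b t * C) - a t ^ (k-1) * (Bj + yi * C)
    with hF
  have hF0 : 0 < F 0 := by
    simp only [hF, ha0, hb0]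
    rw [← htAi, ← htAj]
    linarith
  have hFc : ContinuousAt F 0 := by
    have hca : ContinuousAt a 0 := by
      refine ContinuousAt.rpow_const (by fun_prop) (Or.inr (by positivity))
    have hcb : ContinuousAt b 0 := by
      refine ContinuousAt.rpow_const (by fun_prop) (Or.inr (by positivity))
    exact ((hcb.pow _).mul (continuousAt_const.add (hcb.mul continuousAt_const))).sub
      ((hca.pow _).mul continuousAt_const)
  have hev : ∀ᶠ t in nhds (0:ℝ), 0 < F t := hFc.eventually (lt_mem_nhds hF0)
  rw [Metric.eventually_nhds_iff] at hev
  obtain ⟨ε, hε, hball⟩ := hev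
  -- choose the step
  set t := min (ε/2) (yj ^ k / 2) with hts
  have hyjk : 0 < yj ^ k := pow_pos hj k
  have ht0 : 0 < t := by
    apply lt_min (by linarith) (by linarith)
  have htε : t < ε := by
    calc t ≤ ε/2 := min_le_left _ _
      _ < ε := by linarith
  have htyj : t < yj ^ k := by
    calc t ≤ yj ^ k / 2 := min_le_right _ _
      _ < yj ^ k := by linarith
  have hFt : 0 < F t := hball (by rw [Real.dist_eq, sub_zero, abs_of_pos ht0]; exact htε)
  -- basic facts about a t, b t
  have hat_pos : 0 < a t := Real.rpow_pos_of_pos (by positivity) _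
  have hbt_pos : 0 < b t := Real.rpow_pos_of_pos (by linarith) _
  have hatk : a t ^ k = yi ^ k + t := Real.rpow_inv_natCast_pow (by positivity) (by omega)
  have hbtk : b t ^ k = yj ^ k - t := Real.rpow_inv_natCast_pow (by linarith) (by omega)
  have hyia : yi ≤ a t := by
    refine le_of_pow_le_pow_left₀ (n := k) (by omega) hat_pos.le ?_
    rw [hatk]; linarith
  have hbyj : b t ≤ yj := by
    refine le_of_pow_le_pow_left₀ (n := k) (by omega) hj.le ?_
    rw [hbtk]; linarith
  -- the perturbed point
  set z : V → ℝ := Function.update (Function.update y i (a t)) j (b t) with hz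
  have hzi : z i = a t := by
    rw [hz, Function.update_of_ne hij, Function.update_self]
  have hzj : z j = b t := by rw [hz, Function.update_self]
  have hzv : ∀ v, v ≠ i → v ≠ j → z v = y v := fun v hvi hvj => by
    rw [hz, Function.update_of_ne hvj, Function.update_of_ne hvi]
  have hzS : z ∈ SS V k := by
    constructor
    · intro v
      by_cases h1 : v = j
      · rw [h1, hzj]; exact hbt_pos.le
      by_cases h2 : v = i
      · rw [h2, hzi]; exact hat_pos.le
      · rw [hzv v h2 h1]; exact hy0 v
    · rw [hz, sum_comp_update (fun r => r ^ k), sum_comp_update (fun r => r ^ k),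
        Function.update_of_ne (Ne.symm hij), hatk, hbtk, hy1, hyi, hyj]
      ring
  -- increment analysis
  have hepz : eP H z = a t * b t * C + a t * Bi + b t * Bj + cD H y i j := by
    have e1 : cC H z i j = cC H y i j := cC_congr H (fun v h1 h2 => hzv v h1 h2)
    have e2 : cB H z i j = cB H y i j := cB_congr H (fun v h1 h2 => hzv v h1 h2)
    have e3 : cB H z j i = cB H y j i := cB_congr H (fun v h1 h2 => hzv v h2 h1)
    have e4 : cD H z i j = cD H y i j := cD_congr H (fun v h1 h2 => hzv v h1 h2)
    rw [eP_split H z hij, hzi, hzj, e1, e2, e3, e4, hC, hBi, hBj]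
  have hepy : eP H y = yi * yj * C + yi * Bi + yj * Bj + cD H y i j :=
    eP_split H y hij
  have hBi0 : 0 ≤ Bi := cB_nonneg H hy0 i j
  have hBj0 : 0 ≤ Bj := cB_nonneg H hy0 j i
  have hC0 : 0 ≤ C := cC_nonneg H hy0 i j
  -- lower bound for a t - yi
  have hgain : t / ((k:ℝ) * a t ^ (k-1)) ≤ a t - yi := by
    rw [div_le_iff₀ (by positivity)]
    have := pow_sub_pow_le hk1 hyi0 hyia
    rw [hatk] at this
    linarith
  have hloss : yj - b t ≤ t / ((k:ℝ) * b t ^ (k-1)) := by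
    rw [le_div_iff₀ (by positivity)]
    have := le_pow_sub_pow hk1 hbt_pos.le hbyj
    rw [hbtk] at this
    linarith
  have hdelta : eP H y < eP H z := by
    have hdecomp : eP H z - eP H y
        = (a t - yi) * (Bi + b t * C) - (yj - b t) * (Bj + yi * C) := by
      rw [hepz, hepy]; ring
    have h1 : t / ((k:ℝ) * a t ^ (k-1)) * (Bi + b t * C) ≤ (a t - yi) * (Bi + b t * C) :=
      mul_le_mul_of_nonneg_right hgain (by positivity)
    have h2 : (yj - b t) * (Bj + yi * C) ≤ t / ((k:ℝ) * b t ^ (k-1)) * (Bj + yi * C) :=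
      mul_le_mul_of_nonneg_right hloss (by positivity)
    have hkey : 0 < t / ((k:ℝ) * a t ^ (k-1)) * (Bi + b t * C)
        - t / ((k:ℝ) * b t ^ (k-1)) * (Bj + yi * C) := by
      have hrw : t / ((k:ℝ) * a t ^ (k-1)) * (Bi + b t * C)
          - t / ((k:ℝ) * b t ^ (k-1)) * (Bj + yi * C)
          = t * F t / ((k:ℝ) * (a t ^ (k-1) * b t ^ (k-1))) := by
        rw [hF]
        field_simp
      rw [hrw]
      positivity
    linarith
  exact absurd (hmax z hzS) (by linarith)

end RelocAux

namespace RelocAux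
open Finset

variable {V : Type*} [Fintype V] [DecidableEq V] {k : ℕ}

lemma maximizer_eigen (hk : 3 ≤ k) (H : UHypergraph V k) {y : V → ℝ} (hyS : y ∈ SS V k)
    (hmax : ∀ z ∈ SS V k, eP H z ≤ eP H y) :
    ∀ i, tA H y i = ((k:ℝ) * eP H y) * y i ^ (k-1) := by
  have hy0 := hyS.1
  have hy1 := hyS.2
  have hky : ∀ r : ℝ, r * r ^ (k-1) = r ^ k := fun r => by
    rw [← pow_succ']; congr 1; omega
  have hex : ∃ j0, 0 < y j0 := by
    by_contra h; push_neg at h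
    have hz : ∀ v, y v = 0 := fun v => le_antisymm (h v) (hy0 v)
    rw [Finset.sum_congr rfl (fun v _ => by rw [hz v, zero_pow (by omega : k ≠ 0)])] at hy1
    simp at hy1
  obtain ⟨j0, hj0⟩ := hex
  set lam := tA H y j0 / y j0 ^ (k-1) with hlam
  have hallcases : ∀ i, tA H y i = lam * y i ^ (k-1) := by
    intro i
    have hpowj0 : (0:ℝ) < y j0 ^ (k-1) := pow_pos hj0 _
    by_cases hi : i = j0
    · subst hi; rw [hlam]; field_simp
    · have h1 := no_improve hk H hyS hmax hi hj0
      rcases (hy0 i).eq_or_lt with hyi | hyi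
      · have h3 : y i ^ (k-1) = 0 := by rw [← hyi]; exact zero_pow (by omega)
        have h2 : tA H y i = 0 := by
          rw [h3, zero_mul] at h1
          nlinarith [tA_nonneg H hy0 i]
        rw [h2, h3, mul_zero]
      · have h2 := no_improve hk H hyS hmax (Ne.symm hi) hyi
        have heq : y j0 ^ (k-1) * tA H y i = y i ^ (k-1) * tA H y j0 :=
          le_antisymm h1 h2
        rw [hlam, div_mul_eq_mul_div, eq_div_iff (ne_of_gt hpowj0)]
        linarith [heq]
  have hsum := sum_mul_tA H y
  rw [Finset.sum_congr rfl (fun i _ => by rw [hallcases i])] at hsum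
  have hsum2 : ∑ i, y i * (lam * y i ^ (k-1)) = lam := by
    calc ∑ i, y i * (lam * y i ^ (k-1)) = ∑ i, lam * y i ^ k := by
          refine Finset.sum_congr rfl fun i _ => ?_
          rw [← hky (y i)]; ring
      _ = lam * ∑ i, y i ^ k := by rw [Finset.mul_sum]
      _ = lam := by rw [hy1, mul_one]
  rw [hsum2] at hsum
  intro i
  rw [hallcases i, hsum]

lemma exists_max (H : UHypergraph V k) (hk : 1 ≤ k) (hne : (SS V k).Nonempty) :
    ∃ y ∈ SS V k, ∀ z ∈ SS V k, eP H z ≤ eP H y := by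
  have hcont : Continuous (eP H (V := V)) :=
    continuous_finset_sum _ fun e _ => continuous_finset_prod _ fun v _ => continuous_apply v
  have hclosed : IsClosed (SS V k) := by
    have : SS V k = (⋂ v, {y : V → ℝ | 0 ≤ y v}) ∩ {y : V → ℝ | ∑ v, y v ^ k = 1} := by
      ext y; simp [SS, Set.mem_iInter]
    rw [this]
    refine IsClosed.inter (isClosed_iInter fun v => isClosed_le continuous_const
      (continuous_apply v)) (isClosed_eq ?_ continuous_const)
    exact continuous_finset_sum _ fun v _ => (continuous_apply v).pow k
  have hsub : SS V k ⊆ Set.pi Set.univ (fun _ : V => Set.Icc (0:ℝ) 1) := by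
    intro y hy v _
    refine ⟨hy.1 v, ?_⟩
    have hle : y v ^ k ≤ ∑ w, y w ^ k :=
      Finset.single_le_sum (f := fun w => y w ^ k)
        (fun w _ => pow_nonneg (hy.1 w) k) (Finset.mem_univ v)
    rw [hy.2] at hle
    exact (pow_le_one_iff_of_nonneg (hy.1 v) (by omega)).mp hle
  have hcomp : IsCompact (SS V k) :=
    IsCompact.of_isClosed_subset (isCompact_univ_pi fun _ => isCompact_Icc) hclosed hsub
  obtain ⟨y, hyS, hymax⟩ := hcomp.exists_isMaxOn hne hcont.continuousOn
  exact ⟨y, hyS, fun z hz => hymax hz⟩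

lemma bddAbove_eig (hk : 1 ≤ k) (T : (Fin k → V) → ℝ) (hT : ∀ f, |T f| ≤ 1) :
    BddAbove {r : ℝ | ∃ lam : ℂ, IsEig T lam ∧ ‖lam‖ = r} := by
  refine ⟨(Fintype.card (Fin (k-1) → V) : ℝ), ?_⟩
  rintro r ⟨lam, ⟨x, hx0, heig⟩, rfl⟩
  cases isEmpty_or_nonempty V with
  | inl hemp => exact absurd (funext fun v => hemp.elim v) hx0
  | inr hne =>
  obtain ⟨i0, -, hi0⟩ := Finset.exists_max_image Finset.univ (fun i => ‖x i‖)
    Finset.univ_nonempty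
  have hpos : 0 < ‖x i0‖ := by
    rcases (norm_nonneg (x i0)).eq_or_lt with h | h
    · exfalso
      apply hx0
      funext v
      have := hi0 v (Finset.mem_univ v)
      rw [← h] at this
      exact norm_eq_zero.mp (le_antisymm this (norm_nonneg _))
    · exact h
  have heq := heig i0
  have hb : ‖lam‖ * ‖x i0‖ ^ (k-1)
      ≤ (Fintype.card (Fin (k-1) → V) : ℝ) * ‖x i0‖ ^ (k-1) := by
    have h1 : ‖lam * x i0 ^ (k-1)‖
        = ‖lam‖ * ‖x i0‖ ^ (k-1) := by
      rw [norm_mul, norm_pow]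
    rw [← h1, ← heq]
    unfold tApply
    calc ‖∑ g : Fin (k-1) → V, ((T (tupleCons i0 g) : ℝ) : ℂ) * ∏ j, x (g j)‖
        ≤ ∑ g : Fin (k-1) → V, ‖((T (tupleCons i0 g) : ℝ) : ℂ) * ∏ j, x (g j)‖ :=
          norm_sum_le _ _
      _ ≤ ∑ _g : Fin (k-1) → V, ‖x i0‖ ^ (k-1) := by
          refine Finset.sum_le_sum fun g _ => ?_
          rw [norm_mul, norm_prod]
          calc ‖((T (tupleCons i0 g) : ℝ) : ℂ)‖ * ∏ j, ‖x (g j)‖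
              ≤ 1 * ∏ j, ‖x (g j)‖ := by
                refine mul_le_mul_of_nonneg_right ?_
                  (Finset.prod_nonneg fun j _ => norm_nonneg _)
                rw [Complex.norm_real, Real.norm_eq_abs]; exact hT _
            _ = ∏ j, ‖x (g j)‖ := one_mul _
            _ ≤ ∏ _j : Fin (k-1), ‖x i0‖ :=
                Finset.prod_le_prod (fun j _ => norm_nonneg _)
                  (fun j _ => hi0 (g j) (Finset.mem_univ _))
            _ = ‖x i0‖ ^ (k-1) := by
                rw [Finset.prod_const, Finset.card_univ, Fintype.card_fin]
      _ = (Fintype.card (Fin (k-1) → V) : ℝ) * ‖x i0‖ ^ (k-1) := by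
          rw [Finset.sum_const, Finset.card_univ, nsmul_eq_mul]
  exact le_of_mul_le_mul_right hb (pow_pos hpos (k-1))

lemma isEig_of_real (T : (Fin k → V) → ℝ) (lam : ℝ) (y : V → ℝ) (hy0 : y ≠ 0)
    (h : ∀ i, tApply T y i = lam * y i ^ (k-1)) : IsEig T (lam : ℂ) := by
  refine ⟨fun v => ((y v : ℝ) : ℂ), ?_, ?_⟩
  · intro hc
    apply hy0
    funext v
    have := congrFun hc v
    simpa using this
  · intro i
    have hre := h i
    unfold tApply at hre ⊢
    calc ∑ g : Fin (k-1) → V, ((T (tupleCons i g) : ℝ) : ℂ) * ∏ j, ((y (g j) : ℝ) : ℂ)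
        = (((∑ g : Fin (k-1) → V, T (tupleCons i g) * ∏ j, y (g j) : ℝ)) : ℂ) := by
          push_cast; rfl
      _ = (((lam * y i ^ (k-1) : ℝ)) : ℂ) := by rw [hre]
      _ = (lam : ℂ) * ((y i : ℝ) : ℂ) ^ (k-1) := by push_cast; rfl

end RelocAux

open RelocAux in
/-- (Relocation.) Let `G = G₁(v₂) * G₂(u)` and
`G' = G₁(v₁) * G₂(u)`, i.e. `G'` is obtained from the connected hypergraph `G`
by relocating the sub-hypergraph with edge set `E₂` (meeting the rest of `G`
only in `v₂`) from `v₂` to `v₁`. If some Perron vector `x` of `G` satisfies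
`x v₁ ≥ x v₂`, then `ρ(G') > ρ(G)`. -/
theorem relocation {V : Type*} [Fintype V] [DecidableEq V] {k : ℕ} (hk : 3 ≤ k)
    (G G' : UHypergraph V k) (v1 v2 : V) (hne : v1 ≠ v2)
    (E2 : Finset (Finset V)) (hE2 : E2 ⊆ G.edges) (hE2ne : E2.Nonempty)
    (hsep : esupp (G.edges \ E2) ∩ esupp E2 ⊆ {v2})
    (hv1 : v1 ∈ esupp (G.edges \ E2)) (hv2 : v2 ∈ esupp (G.edges \ E2))
    (hv2' : v2 ∈ esupp E2) (hv1' : v1 ∉ esupp E2)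
    (hG' : G'.edges = (G.edges \ E2) ∪
      E2.image (fun f => if v2 ∈ f then insert v1 (f.erase v2) else f))
    (hGc : G.Connected) (hG'c : G'.Connected)
    (x : V → ℝ) (hx : IsPerron G x) (hle : x v2 ≤ x v1) :
    hSpecRad G < hSpecRad G' := by
  classical
  have hk2 : 2 ≤ k := by omega
  have hky : ∀ r : ℝ, r * r ^ (k-1) = r ^ k := fun r => by
    rw [← pow_succ']; congr 1; omega
  obtain ⟨hxpos, hxeig⟩ := hx
  set ρ := hSpecRad G with hρdef
  have hxeig' : ∀ i, tA G x i = ρ * x i ^ (k-1) := fun i => by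
    rw [← tApply_eq_tA hk2 G x i]; exact hxeig i
  -- basic structural facts
  set φ : Finset V → Finset V := fun f => if v2 ∈ f then insert v1 (f.erase v2) else f
    with hφdef
  have hG'edges : G'.edges = (G.edges \ E2) ∪ E2.image φ := hG'
  have hv1notin : ∀ f ∈ E2, v1 ∉ f := fun f hf h =>
    hv1' (Finset.mem_sup.mpr ⟨f, hf, h⟩)
  obtain ⟨f2, hf2E, hv2f2⟩ : ∃ f ∈ E2, v2 ∈ f := Finset.mem_sup.mp hv2'
  have hcardE2 : ∀ f ∈ E2, f.card = k := fun f hf => G.uniform f (hE2 hf)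
  have hφinj : ∀ f1 ∈ E2, ∀ f2 ∈ E2, φ f1 = φ f2 → f1 = f2 := by
    intro a ha b hb hab
    rw [hφdef] at hab
    simp only at hab
    by_cases h1 : v2 ∈ a <;> by_cases h2 : v2 ∈ b
    · rw [if_pos h1, if_pos h2] at hab
      have h3 : a.erase v2 = b.erase v2 := by
        have := congrArg (fun s => Finset.erase s v1) hab
        simpa [Finset.erase_insert (fun h => hv1notin a ha (Finset.mem_of_mem_erase h)),
          Finset.erase_insert (fun h => hv1notin b hb (Finset.mem_of_mem_erase h))] using this
      have := congrArg (fun s => insert v2 s) h3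
      simpa [Finset.insert_erase h1, Finset.insert_erase h2] using this
    · rw [if_pos h1, if_neg h2] at hab
      exact absurd (hab ▸ Finset.mem_insert_self v1 _) (hv1notin b hb)
    · rw [if_neg h1, if_pos h2] at hab
      exact absurd (hab.symm ▸ Finset.mem_insert_self v1 _) (hv1notin a ha)
    · rwa [if_neg h1, if_neg h2] at hab
  have hφmem : ∀ f ∈ E2, v2 ∈ f → φ f = insert v1 (f.erase v2) := fun f _ h => by
    rw [hφdef]; simp only [if_pos h]
  have hφnot : ∀ f, v2 ∉ f → φ f = f := fun f h => by rw [hφdef]; simp only [if_neg h]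
  have hdisj : Disjoint (G.edges \ E2) (E2.image φ) := by
    rw [Finset.disjoint_right]
    intro e he hedge
    obtain ⟨f, hf, rfl⟩ := Finset.mem_image.mp he
    by_cases hv2f : v2 ∈ f
    · -- pick a vertex of f.erase v2
      have hcard : (f.erase v2).card = k - 1 := by
        rw [Finset.card_erase_of_mem hv2f, hcardE2 f hf]
      obtain ⟨w, hw⟩ : (f.erase v2).Nonempty := by
        rw [← Finset.card_pos, hcard]; omega
      have hw1 : w ∈ esupp (G.edges \ E2) :=
        Finset.mem_sup.mpr ⟨φ f, hedge, by
          rw [hφmem f hf hv2f]; exact Finset.mem_insert_of_mem hw⟩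
      have hw2 : w ∈ esupp E2 :=
        Finset.mem_sup.mpr ⟨f, hf, Finset.mem_of_mem_erase hw⟩
      have := hsep (Finset.mem_inter.mpr ⟨hw1, hw2⟩)
      rw [Finset.mem_singleton] at this
      exact (Finset.ne_of_mem_erase hw) this
    · rw [hφnot f hv2f] at hedge
      exact (Finset.mem_sdiff.mp hedge).2 hf
  have hGsplit : G.edges = (G.edges \ E2) ∪ E2 := (Finset.sdiff_union_of_subset hE2).symm
  -- ρ > 0
  have hρpos : 0 < ρ := by
    have h1 : 0 < tA G x v2 := by
      unfold tA
      refine Finset.sum_pos (fun e _ => Finset.prod_pos fun v _ => hxpos v) ?_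
      exact ⟨f2, Finset.mem_filter.mpr ⟨hE2 hf2E, hv2f2⟩⟩
    have h2 := hxeig' v2
    nlinarith [pow_pos (hxpos v2) (k-1)]
  -- normalization of x
  set σ := ∑ v, x v ^ k with hσdef
  have hσpos : 0 < σ :=
    Finset.sum_pos (fun v _ => pow_pos (hxpos v) k) ⟨v1, Finset.mem_univ v1⟩
  set c : ℝ := σ ^ ((k:ℝ)⁻¹) with hcdef
  have hcpos : 0 < c := Real.rpow_pos_of_pos hσpos _
  have hck : c ^ k = σ := Real.rpow_inv_natCast_pow hσpos.le (by omega)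
  set xh : V → ℝ := fun v => c⁻¹ * x v with hxhdef
  have hxhpos : ∀ v, 0 < xh v := fun v => mul_pos (inv_pos.mpr hcpos) (hxpos v)
  have hxhS : xh ∈ SS V k := by
    refine ⟨fun v => (hxhpos v).le, ?_⟩
    calc ∑ v, xh v ^ k = ∑ v, c⁻¹ ^ k * x v ^ k := by
          refine Finset.sum_congr rfl fun v _ => ?_
          rw [hxhdef]; rw [mul_pow]
      _ = c⁻¹ ^ k * σ := by rw [← Finset.mul_sum, hσdef]
      _ = 1 := by rw [inv_pow, hck]; exact inv_mul_cancel₀ (ne_of_gt hσpos)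
  -- k * eP G x = ρ * σ
  have hkePG : (k:ℝ) * eP G x = ρ * σ := by
    rw [← sum_mul_tA G x]
    calc ∑ i, x i * tA G x i = ∑ i, ρ * x i ^ k := by
          refine Finset.sum_congr rfl fun i _ => ?_
          rw [hxeig' i, ← hky (x i)]; ring
      _ = ρ * σ := by rw [← Finset.mul_sum, hσdef]
  -- eP comparison between G and G'
  have hePG : eP G x = (∑ e ∈ G.edges \ E2, ∏ v ∈ e, x v) + ∑ f ∈ E2, ∏ v ∈ f, x v := by
    unfold eP
    conv_lhs => rw [hGsplit]
    rw [Finset.sum_union Finset.sdiff_disjoint]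
  have hePG' : eP G' x
      = (∑ e ∈ G.edges \ E2, ∏ v ∈ e, x v) + ∑ f ∈ E2, ∏ v ∈ φ f, x v := by
    unfold eP
    rw [hG'edges, Finset.sum_union hdisj, Finset.sum_image hφinj]
  have hterm : ∀ f ∈ E2, ∏ v ∈ f, x v ≤ ∏ v ∈ φ f, x v := by
    intro f hf
    by_cases hv2f : v2 ∈ f
    · rw [hφmem f hf hv2f, Finset.prod_insert (fun h => hv1notin f hf (Finset.mem_of_mem_erase h)),
        ← Finset.mul_prod_erase _ _ hv2f]
      exact mul_le_mul_of_nonneg_right hle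
        (Finset.prod_nonneg fun v _ => (hxpos v).le)
    · rw [hφnot f hv2f]
  have hePcomp : eP G x ≤ eP G' x := by
    rw [hePG, hePG']
    exact add_le_add_right (Finset.sum_le_sum hterm) _
  -- the maximizer
  obtain ⟨ys, hysS, hysmax⟩ := exists_max (G') (by omega) ⟨xh, hxhS⟩
  set lam := (k:ℝ) * eP G' ys with hlamdef
  have heigys : ∀ i, tA G' ys i = lam * ys i ^ (k-1) := maximizer_eigen hk G' hysS hysmax
  -- lam ≥ ρ
  have hePxh : ρ ≤ (k:ℝ) * eP G' xh := by
    have h1 : eP G' xh = c⁻¹ ^ k * eP G' x := eP_smul G' c⁻¹ x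
    have h2 : eP G xh = c⁻¹ ^ k * eP G x := eP_smul G c⁻¹ x
    have h3 : (k:ℝ) * eP G xh = ρ := by
      rw [h2]
      have : (k:ℝ) * (c⁻¹ ^ k * eP G x) = c⁻¹ ^ k * ((k:ℝ) * eP G x) := by ring
      rw [this, hkePG, inv_pow, hck]
      field_simp
    calc ρ = (k:ℝ) * eP G xh := h3.symm
      _ ≤ (k:ℝ) * eP G' xh := by
          rw [h1, h2]
          have hc2 : (0:ℝ) ≤ c⁻¹ ^ k := by positivity
          have hk0 : (0:ℝ) ≤ (k:ℝ) := by positivity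
          exact mul_le_mul_of_nonneg_left
            (mul_le_mul_of_nonneg_left hePcomp hc2) hk0
  have hlamge : ρ ≤ lam := by
    refine hePxh.trans ?_
    have := hysmax xh hxhS
    have hk0 : (0:ℝ) ≤ (k:ℝ) := by positivity
    rw [hlamdef]
    nlinarith
  -- the tA difference at v1
  have htAdiff : ∀ z : V → ℝ, tA G' z v1
      = tA G z v1 + ∑ f ∈ E2.filter (fun f => v2 ∈ f), ∏ v ∈ f.erase v2, z v := by
    intro z
    unfold tA
    have hsplit' : G'.edges.filter (fun e => v1 ∈ e)
        = (G.edges \ E2).filter (fun e => v1 ∈ e)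
          ∪ ((E2.filter (fun f => v2 ∈ f)).image φ) := by
      rw [hG'edges, Finset.filter_union]
      congr 1
      rw [Finset.filter_image]
      refine congrArg _ (Finset.filter_congr fun f hf => ?_)
      constructor
      · intro h1
        by_contra h2
        rw [hφnot f h2] at h1
        exact hv1notin f hf h1
      · intro h2
        rw [hφmem f hf h2]
        exact Finset.mem_insert_self _ _
    have hGfilt : G.edges.filter (fun e => v1 ∈ e)
        = (G.edges \ E2).filter (fun e => v1 ∈ e) := by
      conv_lhs => rw [hGsplit]
      rw [Finset.filter_union, Finset.filter_false_of_mem hv1notin, Finset.union_empty]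
    rw [hsplit', hGfilt, Finset.sum_union]
    · congr 1
      rw [Finset.sum_image (fun a ha b hb hab =>
        hφinj a (Finset.mem_filter.mp ha).1 b (Finset.mem_filter.mp hb).1 hab)]
      refine Finset.sum_congr rfl fun f hf => ?_
      obtain ⟨hfE, hv2f⟩ := Finset.mem_filter.mp hf
      rw [hφmem f hfE hv2f,
        Finset.erase_insert (fun h => hv1notin f hfE (Finset.mem_of_mem_erase h))]
    · refine Finset.disjoint_left.mpr fun e he1 he2 => ?_
      have he1' : e ∈ G.edges \ E2 := Finset.mem_of_mem_filter e he1
      have he2' : e ∈ E2.image φ := by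
        obtain ⟨f, hf, rfl⟩ := Finset.mem_image.mp he2
        exact Finset.mem_image_of_mem φ (Finset.mem_of_mem_filter f hf)
      exact Finset.disjoint_left.mp hdisj he1' he2'
  -- strictness: lam ≠ ρ
  have hstrict : ρ < lam := by
    rcases lt_or_eq_of_le hlamge with h | h
    · exact h
    · exfalso
      -- xh is also a maximizer
      have hmax2 : ∀ z ∈ SS V k, eP G' z ≤ eP G' xh := by
        intro z hz
        refine (hysmax z hz).trans ?_
        have hkpos : (0:ℝ) < (k:ℝ) := by positivity
        have h1 : (k:ℝ) * eP G' ys ≤ (k:ℝ) * eP G' xh := by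
          rw [← hlamdef, ← h]; exact hePxh
        nlinarith
      have heigxh : ∀ i, tA G' xh i = ((k:ℝ) * eP G' xh) * xh i ^ (k-1) :=
        maximizer_eigen hk G' hxhS hmax2
      have hkxh : (k:ℝ) * eP G' xh = ρ := by
        have h1 : (k:ℝ) * eP G' xh ≤ (k:ℝ) * eP G' ys := by
          have := hysmax xh hxhS
          have hkpos : (0:ℝ) < (k:ℝ) := by positivity
          nlinarith
        rw [← hlamdef, ← h] at h1
        exact le_antisymm h1 hePxh
      -- tA G xh v1 = ρ * xh v1 ^ (k-1)
      have hGxh : tA G xh v1 = ρ * xh v1 ^ (k-1) := by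
        have h1 : tA G xh v1 = c⁻¹ ^ (k-1) * tA G x v1 := tA_smul G c⁻¹ x v1
        rw [h1, hxeig' v1]
        have : xh v1 ^ (k-1) = c⁻¹ ^ (k-1) * x v1 ^ (k-1) := by
          rw [hxhdef]; rw [mul_pow]
        rw [this]; ring
      have hS : 0 < ∑ f ∈ E2.filter (fun f => v2 ∈ f), ∏ v ∈ f.erase v2, xh v := by
        refine Finset.sum_pos (fun f _ => Finset.prod_pos fun v _ => hxhpos v) ?_
        exact ⟨f2, Finset.mem_filter.mpr ⟨hf2E, hv2f2⟩⟩
      have := htAdiff xh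
      rw [heigxh v1, hkxh, hGxh] at this
      linarith
  -- lam is an eigenvalue of G'
  have hlampos : 0 < lam := lt_trans hρpos hstrict
  have hysne : ys ≠ 0 := by
    intro h
    have := hysS.2
    rw [h] at this
    simp [zero_pow (show k ≠ 0 by omega)] at this
  have heigfull : ∀ i, tApply (adjTensor G') ys i = lam * ys i ^ (k-1) := fun i => by
    rw [tApply_eq_tA hk2 G' ys i]; exact heigys i
  have hmem : lam ∈ {r : ℝ | ∃ l : ℂ, IsEig (adjTensor G') l ∧ ‖l‖ = r} :=
    ⟨(lam : ℂ), isEig_of_real (adjTensor G') lam ys hysne heigfull, by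
      rw [Complex.norm_real, Real.norm_eq_abs, abs_of_pos hlampos]⟩
  have hbdd : BddAbove {r : ℝ | ∃ l : ℂ, IsEig (adjTensor G') l ∧ ‖l‖ = r} := by
    refine bddAbove_eig (by omega) (adjTensor G') fun f => ?_
    unfold adjTensor
    split
    · rw [abs_of_nonneg (by positivity)]
      refine inv_le_one_of_one_le₀ ?_
      exact_mod_cast Nat.one_le_iff_ne_zero.mpr (Nat.factorial_ne_zero _)
    · simp
  have hfin : lam ≤ hSpecRad G' := by
    unfold hSpecRad specRad
    exact le_csSup hbdd hmem
  linarith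
end RelocAux
end
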